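/- arXiv:1211.5455 — 7 statements merged into one kernel-verified Lean document; each statement's English description precedes it below -/
import Mathlib

section
/- Let W be a random variable taking values in ℕ = {1,2,...} with probability generating function ρ(s) = E[s^W]. Then the function F_ρ is continuous and nondecreasing on [0,∞), F_ρ(α) = 0 for all 0 ≤ α ≤ α*_ρ while F_ρ(α) > 0 for all α > α*_ρ, and the threshold satisfies α*_ρ ∈ [0,1]; moreover, if E[W] < ∞ then α*_ρ < 1. -/
open Filter Topology Set

/-- The probability generating function `ρ(s) = E[s^W]` of an `ℕ`-valued random
variable `W` with probability mass function `p`. -/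
noncomputable def rho (p : ℕ → ℝ) (s : ℝ) : ℝ := ∑' k, p k * s ^ k

/-- The exponential growth rate `F_ρ(α)`, with the convention `0^0 = 1`
(which holds for `Real.rpow`). -/
noncomputable def Ffun (p : ℕ → ℝ) (α : ℝ) : ℝ :=
  Real.log (sSup ((fun γ : ℝ =>
    (1 + rho p (1 - 2 * γ)) ^ α / (2 * γ ^ γ * (1 - γ) ^ (1 - γ))) '' Set.Icc 0 (1/2)))

/-- The threshold `α*_ρ = inf {α ≥ 0 : F_ρ(α) > 0}`. -/
noncomputable def alphaStar (p : ℕ → ℝ) : ℝ := sInf {α : ℝ | 0 ≤ α ∧ 0 < Ffun p α}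


lemma xlog_aux (x : ℝ) (hx : 0 < x) :
    x - 1/2 - x * Real.log 2 ≤ x * Real.log x := by
  have h := Real.log_le_sub_one_of_pos (show (0:ℝ) < (2*x)⁻¹ by positivity)
  rw [Real.log_inv, Real.log_mul (by norm_num) hx.ne'] at h
  have h2 : x * (-(Real.log 2 + Real.log x)) ≤ x * ((2*x)⁻¹ - 1) :=
    mul_le_mul_of_nonneg_left h hx.le
  have hx' : x * (2*x)⁻¹ = 1/2 := by field_simp
  nlinarith

lemma entropy_ge (γ : ℝ) (h0 : 0 ≤ γ) (h1 : γ ≤ 1) :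
    (1:ℝ)/2 ≤ γ ^ γ * (1-γ) ^ (1-γ) := by
  rcases eq_or_lt_of_le h0 with rfl | hγ
  · norm_num [Real.rpow_zero]
  rcases eq_or_lt_of_le h1 with rfl | hγ1
  · norm_num [Real.rpow_zero]
  have h1γ : 0 < 1 - γ := by linarith
  rw [Real.rpow_def_of_pos hγ, Real.rpow_def_of_pos h1γ, ← Real.exp_add]
  have key : -Real.log 2 ≤ γ * Real.log γ + (1-γ) * Real.log (1-γ) := by
    have a := xlog_aux γ hγ
    have b := xlog_aux (1-γ) h1γ
    linarith
  calc (1:ℝ)/2 = Real.exp (-Real.log 2) := by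
        rw [Real.exp_neg, Real.exp_log (by norm_num)]; norm_num
    _ ≤ _ := Real.exp_le_exp.mpr (by linarith [key])

lemma one_sub_pow_le' (s : ℝ) (hs0 : 0 ≤ s) (hs1 : s ≤ 1) (k : ℕ) :
    1 - s^k ≤ k * (1-s) := by
  induction k with
  | zero => simp
  | succ n ih =>
    have hsn : s^n ≤ 1 := pow_le_one₀ hs0 hs1
    have hsn0 : 0 ≤ s^n := pow_nonneg hs0 n
    have : s^(n+1) = s * s^n := by ring
    push_cast
    nlinarith

lemma summable_p' (p : ℕ → ℝ) (hpsum : ∑' k, p k = 1) : Summable p := by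
  by_contra h
  rw [tsum_eq_zero_of_not_summable h] at hpsum
  norm_num at hpsum

lemma summable_ps (p : ℕ → ℝ) (hpnn : ∀ k, 0 ≤ p k) (hpsum : ∑' k, p k = 1)
    (s : ℝ) (hs0 : 0 ≤ s) (hs1 : s ≤ 1) :
    Summable (fun k => p k * s ^ k) := by
  refine (summable_p' p hpsum).of_nonneg_of_le
    (fun k => mul_nonneg (hpnn k) (pow_nonneg hs0 k)) (fun k => ?_)
  exact mul_le_of_le_one_right (hpnn k) (pow_le_one₀ hs0 hs1)

lemma rho_nonneg (p : ℕ → ℝ) (hpnn : ∀ k, 0 ≤ p k) (s : ℝ) (hs0 : 0 ≤ s) : 0 ≤ rho p s :=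
  tsum_nonneg (fun k => mul_nonneg (hpnn k) (pow_nonneg hs0 k))

lemma rho_le_one (p : ℕ → ℝ) (hpnn : ∀ k, 0 ≤ p k) (hpsum : ∑' k, p k = 1)
    (s : ℝ) (hs0 : 0 ≤ s) (hs1 : s ≤ 1) : rho p s ≤ 1 := by
  rw [show (1:ℝ) = ∑' k, p k from hpsum.symm]
  exact Summable.tsum_le_tsum (fun k => mul_le_of_le_one_right (hpnn k) (pow_le_one₀ hs0 hs1))
    (summable_ps p hpnn hpsum s hs0 hs1) (summable_p' p hpsum)

lemma rho_one' (p : ℕ → ℝ) (hpsum : ∑' k, p k = 1) : rho p 1 = 1 := by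
  simp [rho, hpsum]

lemma rho_zero' (p : ℕ → ℝ) (hp0 : p 0 = 0) : rho p 0 = 0 := by
  have h : ∀ k : ℕ, p k * (0:ℝ) ^ k = 0 := by
    intro k; cases k with
    | zero => simp [hp0]
    | succ n => simp
  simp [rho, h]

lemma rho_ge (p : ℕ → ℝ) (hpnn : ∀ k, 0 ≤ p k) (hpsum : ∑' k, p k = 1)
    (hm : Summable (fun k : ℕ => (k:ℝ) * p k)) (s : ℝ) (hs0 : 0 ≤ s) (hs1 : s ≤ 1) :
    1 - (∑' k : ℕ, (k:ℝ) * p k) * (1 - s) ≤ rho p s := by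
  have hsum_s := summable_ps p hpnn hpsum s hs0 hs1
  have hsp := summable_p' p hpsum
  have h1 : 1 - rho p s = ∑' k, (p k - p k * s ^ k) := by
    rw [Summable.tsum_sub hsp hsum_s, hpsum]; rfl
  have h2 : ∑' k : ℕ, (k:ℝ) * p k * (1 - s) = (∑' k : ℕ, (k:ℝ) * p k) * (1 - s) :=
    tsum_mul_right
  have h3 : 1 - rho p s ≤ (∑' k : ℕ, (k:ℝ) * p k) * (1 - s) := by
    rw [h1, ← h2]
    refine Summable.tsum_le_tsum (fun k => ?_) (hsp.sub hsum_s) (hm.mul_right _)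
    have h4 := one_sub_pow_le' s hs0 hs1 k
    have hpk := hpnn k
    nlinarith
  linarith

lemma mean_ge_one (p : ℕ → ℝ) (hpnn : ∀ k, 0 ≤ p k) (hp0 : p 0 = 0) (hpsum : ∑' k, p k = 1)
    (hm : Summable (fun k : ℕ => (k:ℝ) * p k)) : 1 ≤ ∑' k : ℕ, (k:ℝ) * p k := by
  rw [show (1:ℝ) = ∑' k, p k from hpsum.symm]
  refine Summable.tsum_le_tsum (fun k => ?_) (summable_p' p hpsum) hm
  cases k with
  | zero => simp [hp0]
  | succ n =>
    have : (1:ℝ) ≤ (n+1:ℕ) := by exact_mod_cast Nat.one_le_iff_ne_zero.mpr (Nat.succ_ne_zero n)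
    nlinarith [hpnn (n+1)]
set_option maxHeartbeats 1000000 in
theorem stmt0 (p : ℕ → ℝ) (hpnn : ∀ k, 0 ≤ p k) (hp0 : p 0 = 0)
    (hpsum : ∑' k, p k = 1) :
    ContinuousOn (Ffun p) (Set.Ici 0) ∧
    MonotoneOn (Ffun p) (Set.Ici 0) ∧
    (∀ α : ℝ, 0 ≤ α → α ≤ alphaStar p → Ffun p α = 0) ∧
    (∀ α : ℝ, alphaStar p < α → 0 < Ffun p α) ∧
    alphaStar p ∈ Set.Icc (0 : ℝ) 1 ∧
    (Summable (fun k : ℕ => (k : ℝ) * p k) → alphaStar p < 1) := by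
  set g : ℝ → ℝ → ℝ := fun α γ =>
    (1 + rho p (1 - 2 * γ)) ^ α / (2 * γ ^ γ * (1 - γ) ^ (1 - γ)) with hg
  set M : ℝ → ℝ := fun α => sSup (g α '' Set.Icc 0 (1/2)) with hMdef
  have hF : ∀ α, Ffun p α = Real.log (M α) := fun α => rfl
  have hlog2 : (0:ℝ) < Real.log 2 := Real.log_pos one_lt_two
  -- basic bounds on base and denominator
  have hb : ∀ γ ∈ Icc (0:ℝ) (1/2),
      1 ≤ 1 + rho p (1 - 2*γ) ∧ 1 + rho p (1 - 2*γ) ≤ 2 := by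
    intro γ hγ
    have hs0 : (0:ℝ) ≤ 1 - 2*γ := by linarith [hγ.2]
    have hs1 : 1 - 2*γ ≤ 1 := by linarith [hγ.1]
    constructor
    · linarith [rho_nonneg p hpnn _ hs0]
    · linarith [rho_le_one p hpnn hpsum _ hs0 hs1]
  have hd1 : ∀ γ ∈ Icc (0:ℝ) (1/2), 1 ≤ 2 * γ ^ γ * (1-γ) ^ (1-γ) := by
    intro γ hγ
    have := entropy_ge γ hγ.1 (by linarith [hγ.2])
    nlinarith
  have hdpos : ∀ γ ∈ Icc (0:ℝ) (1/2), 0 < 2 * γ ^ γ * (1-γ) ^ (1-γ) :=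
    fun γ hγ => lt_of_lt_of_le one_pos (hd1 γ hγ)
  have hgle : ∀ α : ℝ, 0 ≤ α → ∀ γ ∈ Icc (0:ℝ) (1/2), g α γ ≤ (2:ℝ) ^ α := by
    intro α hα γ hγ
    have h1 := (hb γ hγ).1
    have h2 := (hb γ hγ).2
    calc g α γ ≤ (1 + rho p (1 - 2*γ)) ^ α :=
          div_le_self (Real.rpow_nonneg (by linarith) α) (hd1 γ hγ)
      _ ≤ (2:ℝ) ^ α := Real.rpow_le_rpow (by linarith) h2 hα
  have half_mem : (1/2:ℝ) ∈ Icc (0:ℝ) (1/2) := by constructor <;> norm_num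
  have zero_mem : (0:ℝ) ∈ Icc (0:ℝ) (1/2) := by constructor <;> norm_num
  have hne : ∀ α : ℝ, (g α '' Icc 0 (1/2)).Nonempty :=
    fun α => ⟨g α (1/2), mem_image_of_mem _ half_mem⟩
  have hbdd : ∀ α : ℝ, 0 ≤ α → BddAbove (g α '' Icc 0 (1/2)) := by
    intro α hα
    refine ⟨(2:ℝ)^α, ?_⟩
    rintro x ⟨γ, hγ, rfl⟩
    exact hgle α hα γ hγ
  have hgM : ∀ α : ℝ, 0 ≤ α → ∀ γ ∈ Icc (0:ℝ) (1/2), g α γ ≤ M α :=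
    fun α hα γ hγ => le_csSup (hbdd α hα) (mem_image_of_mem _ hγ)
  have ghalf : ∀ α : ℝ, g α (1/2) = 1 := by
    intro α
    have h0 : (1:ℝ) - 2*(1/2) = 0 := by norm_num
    have hh : (1:ℝ) - 1/2 = 1/2 := by norm_num
    simp only [hg, h0, rho_zero' p hp0, hh, add_zero, Real.one_rpow]
    rw [mul_assoc, ← Real.rpow_add (by norm_num : (0:ℝ) < 1/2)]
    norm_num
  have gzero : ∀ α : ℝ, g α 0 = (2:ℝ)^α / 2 := by
    intro α
    simp only [hg]
    norm_num [rho_one' p hpsum, Real.rpow_zero, Real.one_rpow]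
  have hM1 : ∀ α : ℝ, 0 ≤ α → 1 ≤ M α := by
    intro α hα
    have := hgM α hα (1/2) half_mem
    rwa [ghalf α] at this
  have hMpos : ∀ α : ℝ, 0 ≤ α → 0 < M α := fun α hα => lt_of_lt_of_le one_pos (hM1 α hα)
  have hF0 : ∀ α : ℝ, 0 ≤ α → 0 ≤ Ffun p α := by
    intro α hα
    rw [hF]
    exact Real.log_nonneg (hM1 α hα)
  -- key monotonicity / Lipschitz estimate
  have key : ∀ α α' : ℝ, 0 ≤ α → α ≤ α' →
      Ffun p α ≤ Ffun p α' ∧ Ffun p α' ≤ Ffun p α + (α' - α) * Real.log 2 := by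
    intro α α' hα hαα'
    have hα' : 0 ≤ α' := le_trans hα hαα'
    have hMM' : M α ≤ M α' := by
      refine csSup_le (hne α) ?_
      rintro x ⟨γ, hγ, rfl⟩
      refine le_trans ?_ (hgM α' hα' γ hγ)
      have hnum : (1 + rho p (1 - 2*γ)) ^ α ≤ (1 + rho p (1 - 2*γ)) ^ α' :=
        Real.rpow_le_rpow_of_exponent_le (hb γ hγ).1 hαα'
      exact div_le_div_of_nonneg_right hnum (hdpos γ hγ).le
    have hMlip : M α' ≤ M α * (2:ℝ) ^ (α' - α) := by
      refine csSup_le (hne α') ?_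
      rintro x ⟨γ, hγ, rfl⟩
      have hbγ := hb γ hγ
      have hb0 : (0:ℝ) < 1 + rho p (1 - 2*γ) := by linarith [hbγ.1]
      have hsplit : g α' γ = g α γ * (1 + rho p (1 - 2*γ)) ^ (α' - α) := by
        simp only [hg]
        rw [show α' = α + (α' - α) by ring, Real.rpow_add hb0]
        ring
      rw [hsplit]
      have h1 : (1 + rho p (1 - 2*γ)) ^ (α' - α) ≤ (2:ℝ) ^ (α' - α) :=
        Real.rpow_le_rpow (by linarith [hbγ.1]) hbγ.2 (by linarith [hαα'])
      have h2 : 0 ≤ g α γ := by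
        apply div_nonneg (Real.rpow_nonneg (by linarith [hbγ.1]) _) (hdpos γ hγ).le
      exact mul_le_mul (hgM α hα γ hγ) h1 (Real.rpow_nonneg (by linarith [hbγ.1]) _)
        (hMpos α hα).le
    constructor
    · rw [hF, hF]
      exact Real.log_le_log (hMpos α hα) hMM'
    · rw [hF, hF]
      calc Real.log (M α') ≤ Real.log (M α * (2:ℝ) ^ (α' - α)) :=
            Real.log_le_log (hMpos α' hα') hMlip
        _ = Real.log (M α) + (α' - α) * Real.log 2 := by
            rw [Real.log_mul (hMpos α hα).ne' (Real.rpow_pos_of_pos two_pos _).ne',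
              Real.log_rpow two_pos]
  -- continuity via Lipschitz
  have hcont : ContinuousOn (Ffun p) (Set.Ici 0) := by
    have lip : LipschitzOnWith (Real.toNNReal (Real.log 2)) (Ffun p) (Ici 0) := by
      rw [lipschitzOnWith_iff_dist_le_mul]
      intro x hx y hy
      rw [Real.coe_toNNReal _ hlog2.le, Real.dist_eq, Real.dist_eq]
      rcases le_total x y with h | h
      · have hk := key x y hx h
        rw [abs_of_nonpos (by linarith [hk.1]), abs_of_nonpos (by linarith)]
        nlinarith [hk.2]
      · have hk := key y x hy h
        rw [abs_of_nonneg (by linarith [hk.1]), abs_of_nonneg (by linarith)]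
        nlinarith [hk.2]
    exact lip.continuousOn
  have hmono : MonotoneOn (Ffun p) (Set.Ici 0) := fun a ha b _ hab => (key a b ha hab).1
  -- the set S
  have h2S : ∀ α : ℝ, 1 < α → 0 < Ffun p α := by
    intro α hα
    have hα0 : (0:ℝ) ≤ α := by linarith
    have hle : (2:ℝ)^α / 2 ≤ M α := by
      have := hgM α hα0 0 zero_mem
      rwa [gzero α] at this
    have hlogval : Real.log ((2:ℝ)^α / 2) = (α - 1) * Real.log 2 := by
      rw [Real.log_div (Real.rpow_pos_of_pos two_pos _).ne' (by norm_num),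
        Real.log_rpow two_pos]
      ring
    have hpos : 0 < Real.log ((2:ℝ)^α / 2) := by
      rw [hlogval]; exact mul_pos (by linarith) hlog2
    rw [hF]
    calc (0:ℝ) < Real.log ((2:ℝ)^α / 2) := hpos
      _ ≤ Real.log (M α) :=
          Real.log_le_log (by positivity) hle
  have hS_ne : {α : ℝ | 0 ≤ α ∧ 0 < Ffun p α}.Nonempty :=
    ⟨2, by norm_num, h2S 2 (by norm_num)⟩
  have hS_bdd : BddBelow {α : ℝ | 0 ≤ α ∧ 0 < Ffun p α} := ⟨0, fun x hx => hx.1⟩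
  have hstar0 : 0 ≤ alphaStar p := le_csInf hS_ne (fun b hb => hb.1)
  have hstar1 : alphaStar p ≤ 1 := by
    by_contra h
    push_neg at h
    have ht : (1 + alphaStar p)/2 ∈ {α : ℝ | 0 ≤ α ∧ 0 < Ffun p α} :=
      ⟨by linarith, h2S _ (by linarith)⟩
    have := csInf_le hS_bdd ht
    simp only [alphaStar] at this h
    linarith
  have hFzero : Ffun p 0 = 0 := by
    have hMle : M 0 ≤ 1 := by
      refine csSup_le (hne 0) ?_
      rintro x ⟨γ, hγ, rfl⟩
      have : g 0 γ = 1 / (2 * γ ^ γ * (1-γ) ^ (1-γ)) := by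
        simp only [hg, Real.rpow_zero]
      rw [this]
      rw [div_le_one (hdpos γ hγ)]
      exact hd1 γ hγ
    have : M 0 = 1 := le_antisymm hMle (hM1 0 le_rfl)
    rw [hF, this, Real.log_one]
  -- part 3 : F = 0 on [0, alphaStar]
  have part3 : ∀ α : ℝ, 0 ≤ α → α ≤ alphaStar p → Ffun p α = 0 := by
    intro α hα0 hαs
    refine le_antisymm ?_ (hF0 α hα0)
    by_contra hpos
    push_neg at hpos
    have hmem : α ∈ {α : ℝ | 0 ≤ α ∧ 0 < Ffun p α} := ⟨hα0, hpos⟩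
    have heq : α = alphaStar p := le_antisymm hαs (csInf_le hS_bdd hmem)
    rcases eq_or_lt_of_le hα0 with rfl | hα0'
    · rw [hFzero] at hpos; exact lt_irrefl 0 hpos
    · set β := max 0 (α - Ffun p α / (2 * Real.log 2)) with hβ
      have hβ0 : 0 ≤ β := le_max_left _ _
      have hβα : β < α := max_lt hα0' (sub_lt_self α (by positivity))
      have hβge : α - Ffun p α / (2 * Real.log 2) ≤ β := le_max_right _ _
      have hk := (key β α hβ0 hβα.le).2
      have hFβpos : 0 < Ffun p β := by
        have h1 : (α - β) * Real.log 2 ≤ Ffun p α / 2 := by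
          have h2 : α - β ≤ Ffun p α / (2 * Real.log 2) := by linarith
          have h3 := mul_le_mul_of_nonneg_right h2 hlog2.le
          have h4 : Ffun p α / (2 * Real.log 2) * Real.log 2 = Ffun p α / 2 := by
            field_simp [hlog2.ne']
          rw [h4] at h3
          exact h3
        linarith
      have : alphaStar p ≤ β := csInf_le hS_bdd ⟨hβ0, hFβpos⟩
      linarith [hβα, heq ▸ this]
  -- part 4 : F > 0 above alphaStar
  have part4 : ∀ α : ℝ, alphaStar p < α → 0 < Ffun p α := by
    intro α hα
    obtain ⟨β, hβS, hβα⟩ := exists_lt_of_csInf_lt hS_ne hα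
    have := (key β α hβS.1 hβα.le).1
    linarith [hβS.2]
  refine ⟨hcont, hmono, part3, part4, ⟨hstar0, hstar1⟩, ?_⟩
  -- part 6 : finite mean implies alphaStar < 1
  intro hm
  set m : ℝ := ∑' k : ℕ, (k:ℝ) * p k with hmm
  have hm1 : 1 ≤ m := mean_ge_one p hpnn hp0 hpsum hm
  set γ₀ : ℝ := Real.exp (-(2*m+1)) with hγ₀
  have hγ0pos : 0 < γ₀ := Real.exp_pos _
  have hbound : γ₀ * (2*m+2) ≤ 1 := by
    have h1 : 2*m+1+1 ≤ Real.exp (2*m+1) := Real.add_one_le_exp _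
    have h2 : γ₀ * Real.exp (2*m+1) = 1 := by
      rw [hγ₀, ← Real.exp_add, show -(2*m+1)+(2*m+1) = 0 by ring, Real.exp_zero]
    nlinarith [Real.exp_pos (2*m+1)]
  have hγ0half : γ₀ ≤ 1/2 := by nlinarith [mul_nonneg (le_of_lt hγ0pos) (show (0:ℝ) ≤ 2*m - 2 by linarith)]
  have hγ0mem : γ₀ ∈ Icc (0:ℝ) (1/2) := ⟨hγ0pos.le, hγ0half⟩
  -- lower bound for the numerator at γ₀
  have hs0 : (0:ℝ) ≤ 1 - 2*γ₀ := by linarith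
  have hs1 : 1 - 2*γ₀ ≤ 1 := by linarith
  have hnum : 2 - 2*m*γ₀ ≤ 1 + rho p (1 - 2*γ₀) := by
    have := rho_ge p hpnn hpsum hm (1 - 2*γ₀) hs0 hs1
    have h1s : 1 - (1 - 2*γ₀) = 2*γ₀ := by ring
    rw [h1s] at this
    rw [← hmm] at this
    nlinarith
  -- upper bound for the denominator at γ₀
  have hden : 2 * γ₀ ^ γ₀ * (1-γ₀) ^ (1-γ₀) ≤ 2 * (1 + γ₀*(2*m+1))⁻¹ := by
    have h1 : (1-γ₀) ^ (1-γ₀) ≤ 1 :=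
      Real.rpow_le_one (by linarith) (by linarith) (by linarith)
    have h2 : γ₀ ^ γ₀ = Real.exp (-(γ₀ * (2*m+1))) := by
      rw [Real.rpow_def_of_pos hγ0pos, hγ₀, Real.log_exp]
      ring_nf
    have h3 : Real.exp (-(γ₀ * (2*m+1))) ≤ (1 + γ₀*(2*m+1))⁻¹ := by
      rw [Real.exp_neg]
      have h4 : 1 + γ₀*(2*m+1) ≤ Real.exp (γ₀*(2*m+1)) := by
        have := Real.add_one_le_exp (γ₀*(2*m+1))
        linarith
      have h5 : 0 < 1 + γ₀*(2*m+1) := by nlinarith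
      exact inv_anti₀ h5 h4
    have h6 : 0 < γ₀ ^ γ₀ := Real.rpow_pos_of_pos hγ0pos _
    have h7 : 0 ≤ (1-γ₀) ^ (1-γ₀) := Real.rpow_nonneg (by linarith) _
    calc 2 * γ₀ ^ γ₀ * (1-γ₀) ^ (1-γ₀) ≤ 2 * γ₀ ^ γ₀ * 1 := by nlinarith
      _ = 2 * γ₀ ^ γ₀ := by ring
      _ ≤ 2 * (1 + γ₀*(2*m+1))⁻¹ := by rw [h2]; nlinarith [h3]
  have hdenpos := hdpos γ₀ hγ0mem
  have hinvpos : 0 < 1 + γ₀*(2*m+1) := by nlinarith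
  -- g 1 γ₀ > 1
  have hg1 : 1 < g 1 γ₀ := by
    have hnum0 : (0:ℝ) < 2 - 2*m*γ₀ := by nlinarith
    have hquot : (2 - 2*m*γ₀) / (2 * (1 + γ₀*(2*m+1))⁻¹) ≤ g 1 γ₀ := by
      simp only [hg, Real.rpow_one]
      exact div_le_div₀ (by linarith [(hb γ₀ hγ0mem).2, hnum]) hnum (by positivity) hden
    have h8 : γ₀*(2*m+2)*(m*(2*m+1)) ≤ 1*(m*(2*m+1)) :=
      mul_le_mul_of_nonneg_right hbound (by nlinarith)
    have hpos2 : 0 < (m+1) - m*γ₀*(2*m+1) := by nlinarith [h8, hm1, hγ0pos]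
    have hval : 1 < (2 - 2*m*γ₀) / (2 * (1 + γ₀*(2*m+1))⁻¹) := by
      rw [one_lt_div (by positivity),
        show (2:ℝ) * (1 + γ₀*(2*m+1))⁻¹ = 2 / (1 + γ₀*(2*m+1)) by ring,
        div_lt_iff₀ hinvpos]
      nlinarith [mul_pos hγ0pos hpos2]
    linarith
  have hF1 : 0 < Ffun p 1 := by
    rw [hF]
    exact Real.log_pos (lt_of_lt_of_le hg1 (hgM 1 zero_le_one γ₀ hγ0mem))
  -- pick α < 1 with F α > 0
  obtain ⟨α, hα0, hαlt, hαlog⟩ :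
      ∃ α : ℝ, 0 ≤ α ∧ α < 1 ∧ (1 - α) * Real.log 2 ≤ Ffun p 1 / 2 := by
    refine ⟨1 - min (1/2) (Ffun p 1 / (2 * Real.log 2)), ?_, ?_, ?_⟩
    · have := min_le_left (1/2:ℝ) (Ffun p 1 / (2 * Real.log 2))
      linarith
    · have : 0 < min (1/2:ℝ) (Ffun p 1 / (2 * Real.log 2)) :=
        lt_min (by norm_num) (by positivity)
      linarith
    · have h2 : 1 - (1 - min (1/2:ℝ) (Ffun p 1 / (2 * Real.log 2)))
          ≤ Ffun p 1 / (2 * Real.log 2) := by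
        have := min_le_right (1/2:ℝ) (Ffun p 1 / (2 * Real.log 2))
        linarith
      calc (1 - (1 - min (1/2:ℝ) (Ffun p 1 / (2 * Real.log 2)))) * Real.log 2
          ≤ (Ffun p 1 / (2 * Real.log 2)) * Real.log 2 :=
            mul_le_mul_of_nonneg_right h2 hlog2.le
        _ = Ffun p 1 / 2 := by
            field_simp [hlog2.ne']
  have hk := (key α 1 hα0 hαlt.le).2
  have hFα : 0 < Ffun p α := by linarith
  have : alphaStar p ≤ α := csInf_le hS_bdd ⟨hα0, hFα⟩
  linarith
end

section
/- Let W be a random variable taking values in ℕ = {1,2,...} with probability generating function ρ(s) = E[s^W]. Then α*_ρ = 0 if and only if P[W = 1] > 0. -/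
open Filter Topology Set

namespace Stmt1Aux

/-! ### Elementary logarithm inequalities -/

/-- `log (1+t) ≥ t/(1+t)` for `t ≥ 0`. -/
lemma log_one_add_ge (t : ℝ) (ht : 0 ≤ t) : t / (1 + t) ≤ Real.log (1 + t) := by
  have h1 : (0:ℝ) < 1 + t := by linarith
  have h2 := Real.log_le_sub_one_of_pos (show (0:ℝ) < (1+t)⁻¹ by positivity)
  rw [Real.log_inv] at h2
  have h3 : (1+t)⁻¹ - 1 = -(t/(1+t)) := by field_simp; ring
  rw [h3] at h2
  linarith

/-- `x * log x ≥ x - 1` for `x > 0`. -/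
lemma mul_log_ge (x : ℝ) (hx : 0 < x) : x - 1 ≤ x * Real.log x := by
  have h2 := Real.log_le_sub_one_of_pos (show (0:ℝ) < x⁻¹ by positivity)
  rw [Real.log_inv] at h2
  have h3 : x * (x⁻¹ - 1) = 1 - x := by field_simp
  nlinarith

/-- The function `log(1+x) - log(1-x) - 2x` is nonnegative on `[0,1)`. -/
lemma lemA : ∀ x ∈ Set.Ico (0:ℝ) 1, 2*x ≤ Real.log (1+x) - Real.log (1-x) := by
  set f : ℝ → ℝ := fun y => Real.log (1+y) - Real.log (1-y) - 2*y with hf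
  have hderiv : ∀ x ∈ Set.Ioo (0:ℝ) 1, HasDerivAt f ((1+x)⁻¹ + (1-x)⁻¹ - 2) x := by
    intro x hx
    have hx1 : (1:ℝ) + x ≠ 0 := by nlinarith [hx.1]
    have hx2 : (1:ℝ) - x ≠ 0 := by nlinarith [hx.2]
    have h1 : HasDerivAt (fun y : ℝ => Real.log (1+y)) ((1+x)⁻¹) x := by
      have := (Real.hasDerivAt_log hx1).comp x ((hasDerivAt_id x).const_add 1)
      simpa [Function.comp_def] using this
    have h2 : HasDerivAt (fun y : ℝ => Real.log (1-y)) (-(1-x)⁻¹) x := by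
      have hi : HasDerivAt (fun y : ℝ => 1 - y) (-1) x := by
        simpa [Pi.sub_def] using (hasDerivAt_const x (1:ℝ)).sub (hasDerivAt_id x)
      have := (Real.hasDerivAt_log hx2).comp x hi
      simpa [Function.comp_def] using this
    have h3 : HasDerivAt (fun y : ℝ => 2*y) 2 x := by
      simpa using (hasDerivAt_id x).const_mul 2
    have := (h1.sub h2).sub h3
    refine this.congr_deriv ?_
    ring
  have hmono : MonotoneOn f (Set.Ico (0:ℝ) 1) := by
    apply monotoneOn_of_deriv_nonneg (convex_Ico 0 1)
    · apply ContinuousOn.sub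
      apply ContinuousOn.sub
      · apply ContinuousOn.log (by fun_prop)
        intro x hx; simp only [Set.mem_Ico] at hx; nlinarith [hx.1]
      · apply ContinuousOn.log (by fun_prop)
        intro x hx; simp only [Set.mem_Ico] at hx; nlinarith [hx.2]
      · fun_prop
    · rw [interior_Ico]
      intro x hx
      exact (hderiv x hx).differentiableAt.differentiableWithinAt
    · rw [interior_Ico]
      intro x hx
      rw [(hderiv x hx).deriv]
      have h1 : (0:ℝ) < 1 + x := by nlinarith [hx.1]
      have h2 : (0:ℝ) < 1 - x := by nlinarith [hx.2]
      rw [sub_nonneg]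
      have h3 : (1+x)⁻¹ + (1-x)⁻¹ = 2 / ((1+x)*(1-x)) := by
        field_simp
        ring
      rw [h3, le_div_iff₀ (by positivity)]
      nlinarith [sq_nonneg x, hx.1]
  intro x hx
  have h0 : f 0 ≤ f x := by
    apply hmono _ hx hx.1
    simp
  have : f 0 = 0 := by simp [hf]
  rw [this] at h0
  simp only [hf] at h0
  linarith

/-- `(1+x) log(1+x) + (1-x) log(1-x) ≥ x²` on `[0,1)`. -/
lemma lemB : ∀ x ∈ Set.Ico (0:ℝ) 1,
    x^2 ≤ (1+x) * Real.log (1+x) + (1-x) * Real.log (1-x) := by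
  set f : ℝ → ℝ := fun y => (1+y) * Real.log (1+y) + (1-y) * Real.log (1-y) - y^2 with hf
  have hderiv : ∀ x ∈ Set.Ioo (0:ℝ) 1,
      HasDerivAt f (Real.log (1+x) - Real.log (1-x) - 2*x) x := by
    intro x hx
    have hx1 : (1:ℝ) + x ≠ 0 := by nlinarith [hx.1]
    have hx2 : (1:ℝ) - x ≠ 0 := by nlinarith [hx.2]
    have hI : HasDerivAt (fun y : ℝ => 1 + y) 1 x := by
      simpa using (hasDerivAt_id x).const_add 1
    have hJ : HasDerivAt (fun y : ℝ => 1 - y) (-1) x := by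
      simpa [Pi.sub_def] using (hasDerivAt_const x (1:ℝ)).sub (hasDerivAt_id x)
    have h1 : HasDerivAt (fun y : ℝ => Real.log (1+y)) ((1+x)⁻¹) x := by
      have := (Real.hasDerivAt_log hx1).comp x hI
      simpa [Function.comp_def] using this
    have h2 : HasDerivAt (fun y : ℝ => Real.log (1-y)) (-(1-x)⁻¹) x := by
      have := (Real.hasDerivAt_log hx2).comp x hJ
      simpa [Function.comp_def] using this
    have h3 : HasDerivAt (fun y : ℝ => (1+y) * Real.log (1+y))
        (1 * Real.log (1+x) + (1+x) * (1+x)⁻¹) x := hI.mul h1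
    have h4 : HasDerivAt (fun y : ℝ => (1-y) * Real.log (1-y))
        ((-1) * Real.log (1-x) + (1-x) * (-(1-x)⁻¹)) x := hJ.mul h2
    have h5 : HasDerivAt (fun y : ℝ => y^2) (2*x) x := by
      simpa using (hasDerivAt_pow 2 x)
    have := (h3.add h4).sub h5
    refine this.congr_deriv ?_
    field_simp
    ring
  have hmono : MonotoneOn f (Set.Ico (0:ℝ) 1) := by
    apply monotoneOn_of_deriv_nonneg (convex_Ico 0 1)
    · apply ContinuousOn.sub
      apply ContinuousOn.add
      · apply ContinuousOn.mul (by fun_prop)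
        apply ContinuousOn.log (by fun_prop)
        intro x hx; simp only [Set.mem_Ico] at hx; nlinarith [hx.1]
      · apply ContinuousOn.mul (by fun_prop)
        apply ContinuousOn.log (by fun_prop)
        intro x hx; simp only [Set.mem_Ico] at hx; nlinarith [hx.2]
      · fun_prop
    · rw [interior_Ico]
      intro x hx
      exact (hderiv x hx).differentiableAt.differentiableWithinAt
    · rw [interior_Ico]
      intro x hx
      rw [(hderiv x hx).deriv, sub_nonneg]
      exact lemA x ⟨le_of_lt hx.1, hx.2⟩
  intro x hx
  have h0 : f 0 ≤ f x := by
    apply hmono _ hx hx.1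
    simp
  have : f 0 = 0 := by simp [hf]
  rw [this] at h0
  simp only [hf] at h0
  linarith


section Main

variable {p : ℕ → ℝ}

lemma summable_p (hpsum : ∑' k, p k = 1) : Summable p := by
  by_contra h
  rw [tsum_eq_zero_of_not_summable h] at hpsum
  norm_num at hpsum

lemma summable_term (hpnn : ∀ k, 0 ≤ p k) (hpsum : ∑' k, p k = 1)
    {s : ℝ} (hs0 : 0 ≤ s) (hs1 : s ≤ 1) : Summable (fun k => p k * s ^ k) := by
  refine (summable_p hpsum).of_nonneg_of_le (fun k => mul_nonneg (hpnn k) (pow_nonneg hs0 k)) (fun k => ?_)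
  calc p k * s ^ k ≤ p k * 1 :=
        mul_le_mul_of_nonneg_left (pow_le_one₀ hs0 hs1) (hpnn k)
    _ = p k := mul_one _

lemma rho_nonneg (hpnn : ∀ k, 0 ≤ p k) {s : ℝ} (hs0 : 0 ≤ s) : 0 ≤ rho p s :=
  tsum_nonneg (fun k => mul_nonneg (hpnn k) (pow_nonneg hs0 k))

lemma rho_le_one (hpnn : ∀ k, 0 ≤ p k) (hpsum : ∑' k, p k = 1)
    {s : ℝ} (hs0 : 0 ≤ s) (hs1 : s ≤ 1) : rho p s ≤ 1 := by
  have h := Summable.tsum_le_tsum (f := fun k => p k * s ^ k) (g := p)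
    (fun k => by
      calc p k * s ^ k ≤ p k * 1 :=
            mul_le_mul_of_nonneg_left (pow_le_one₀ hs0 hs1) (hpnn k)
        _ = p k := mul_one _)
    (summable_term hpnn hpsum hs0 hs1) (summable_p hpsum)
  rw [hpsum] at h
  exact h

lemma rho_zero (hp0 : p 0 = 0) : rho p 0 = 0 := by
  have : (fun k => p k * (0:ℝ) ^ k) = fun _ => (0:ℝ) := by
    funext k
    cases k with
    | zero => simp [hp0]
    | succ n => simp
  rw [rho, this, tsum_zero]

lemma rho_one (hpsum : ∑' k, p k = 1) : rho p 1 = 1 := by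
  simp [rho, hpsum]

lemma rho_ge_p1 (hpnn : ∀ k, 0 ≤ p k) (hpsum : ∑' k, p k = 1)
    {s : ℝ} (hs0 : 0 ≤ s) (hs1 : s ≤ 1) : p 1 * s ≤ rho p s := by
  have h := Summable.le_tsum (summable_term hpnn hpsum hs0 hs1) 1
    (fun j _ => by have := hpnn j; positivity)
  simpa [rho] using h

lemma p1_le_one (hpnn : ∀ k, 0 ≤ p k) (hpsum : ∑' k, p k = 1) : p 1 ≤ 1 := by
  have h := Summable.le_tsum (summable_p hpsum) 1 (fun j _ => hpnn j)
  rw [hpsum] at h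
  exact h

lemma rho_le_sq (hpnn : ∀ k, 0 ≤ p k) (hp0 : p 0 = 0) (hp1 : p 1 = 0)
    (hpsum : ∑' k, p k = 1) {s : ℝ} (hs0 : 0 ≤ s) (hs1 : s ≤ 1) :
    rho p s ≤ s ^ 2 := by
  have h := Summable.tsum_le_tsum (f := fun k => p k * s ^ k) (g := fun k => p k * s ^ 2)
    (fun k => by
      match k with
      | 0 => simp [hp0]
      | 1 => simp [hp1]
      | (n+2) =>
        exact mul_le_mul_of_nonneg_left
          (pow_le_pow_of_le_one hs0 hs1 (by omega)) (hpnn _))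
    (summable_term hpnn hpsum hs0 hs1)
    ((summable_p hpsum).mul_right _)
  rw [tsum_mul_right, hpsum, one_mul] at h
  exact h

/-! ### The function inside the supremum -/

/-- Abbreviation for the function whose image is used in `Ffun`. -/
noncomputable def term (p : ℕ → ℝ) (α : ℝ) (γ : ℝ) : ℝ :=
  (1 + rho p (1 - 2 * γ)) ^ α / (2 * γ ^ γ * (1 - γ) ^ (1 - γ))

lemma Ffun_eq (p : ℕ → ℝ) (α : ℝ) :
    Ffun p α = Real.log (sSup (term p α '' Set.Icc 0 (1/2))) := rfl

lemma denom_exp {γ : ℝ} (h0 : 0 < γ) (h1 : γ < 1) :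
    2 * γ ^ γ * (1 - γ) ^ (1 - γ) =
      Real.exp (Real.log 2 + Real.log γ * γ + Real.log (1 - γ) * (1 - γ)) := by
  rw [Real.rpow_def_of_pos h0, Real.rpow_def_of_pos (by linarith),
    Real.exp_add, Real.exp_add, Real.exp_log (by norm_num : (0:ℝ) < 2)]

lemma denom_ge (γ : ℝ) (hγ : γ ∈ Set.Icc (0:ℝ) (1/2)) :
    (1:ℝ)/3 ≤ 2 * γ ^ γ * (1 - γ) ^ (1 - γ) := by
  obtain ⟨h0, h1⟩ := hγ
  have hb : (1:ℝ)/2 ≤ (1 - γ) ^ (1 - γ) := by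
    have h2 : (0:ℝ) < 1 - γ := by linarith
    have h3 : (1 - γ) ^ (1:ℝ) ≤ (1 - γ) ^ (1 - γ) :=
      Real.rpow_le_rpow_of_exponent_ge h2 (by linarith) (by linarith)
    rw [Real.rpow_one] at h3
    linarith
  rcases eq_or_lt_of_le h0 with h | h
  · rw [← h]
    norm_num
  · have hg : (1:ℝ)/3 ≤ γ ^ γ := by
      rw [Real.rpow_def_of_pos h]
      have h4 : γ - 1 ≤ γ * Real.log γ := mul_log_ge γ h
      have h5 : (-1:ℝ) ≤ Real.log γ * γ := by nlinarith
      have h6 : Real.exp (-1) ≤ Real.exp (Real.log γ * γ) := Real.exp_le_exp.mpr h5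
      have h7 : (1:ℝ)/3 ≤ Real.exp (-1) := by
        rw [Real.exp_neg]
        rw [div_le_iff₀ (by norm_num), inv_mul_eq_div, le_div_iff₀ (Real.exp_pos 1)]
        nlinarith [Real.exp_one_lt_d9]
      linarith
    have hgnn : (0:ℝ) ≤ γ ^ γ := le_trans (by norm_num) hg
    nlinarith

lemma denom_pos (γ : ℝ) (hγ : γ ∈ Set.Icc (0:ℝ) (1/2)) :
    0 < 2 * γ ^ γ * (1 - γ) ^ (1 - γ) :=
  lt_of_lt_of_le (by norm_num) (denom_ge γ hγ)

lemma term_le_bound (hpnn : ∀ k, 0 ≤ p k) (hpsum : ∑' k, p k = 1)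
    {α : ℝ} (hα : 0 ≤ α) (γ : ℝ) (hγ : γ ∈ Set.Icc (0:ℝ) (1/2)) :
    term p α γ ≤ 3 * 2 ^ α := by
  obtain ⟨h0, h1⟩ := hγ
  have hs0 : (0:ℝ) ≤ 1 - 2 * γ := by linarith
  have hs1 : (1:ℝ) - 2 * γ ≤ 1 := by linarith
  have hρ0 := rho_nonneg hpnn hs0
  have hρ1 := rho_le_one hpnn hpsum hs0 hs1
  have hnum : (1 + rho p (1 - 2 * γ)) ^ α ≤ 2 ^ α :=
    Real.rpow_le_rpow (by linarith) (by linarith) hα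
  have h := div_le_div₀ (by positivity) hnum (by norm_num : (0:ℝ) < 1/3)
    (denom_ge γ ⟨h0, h1⟩)
  calc term p α γ ≤ 2 ^ α / (1/3) := h
    _ = 3 * 2 ^ α := by ring

lemma bddAbove_term (hpnn : ∀ k, 0 ≤ p k) (hpsum : ∑' k, p k = 1)
    {α : ℝ} (hα : 0 ≤ α) : BddAbove (term p α '' Set.Icc 0 (1/2)) := by
  refine ⟨3 * 2 ^ α, ?_⟩
  rintro t ⟨γ, hγ, rfl⟩
  exact term_le_bound hpnn hpsum hα γ hγ

lemma term_half (hp0 : p 0 = 0) (α : ℝ) : term p α (1/2) = 1 := by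
  have h1 : (1:ℝ) - 2 * (1/2) = 0 := by norm_num
  have h2 : ((1:ℝ)/2) ^ ((1:ℝ)/2) * ((1:ℝ)/2) ^ ((1:ℝ)/2) = 1/2 := by
    rw [← Real.rpow_add (by norm_num)]
    norm_num
  rw [term, h1, rho_zero hp0]
  have h3 : (1:ℝ) - 1/2 = 1/2 := by norm_num
  rw [h3]
  rw [show (2:ℝ) * (1/2) ^ ((1:ℝ)/2) * (1/2) ^ ((1:ℝ)/2)
      = 2 * ((1/2) ^ ((1:ℝ)/2) * (1/2) ^ ((1:ℝ)/2)) by ring, h2]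
  norm_num

lemma sSup_ge_one (hpnn : ∀ k, 0 ≤ p k) (hp0 : p 0 = 0) (hpsum : ∑' k, p k = 1)
    {α : ℝ} (hα : 0 ≤ α) : 1 ≤ sSup (term p α '' Set.Icc 0 (1/2)) := by
  have hmem : (1:ℝ) ∈ term p α '' Set.Icc 0 (1/2) := by
    refine ⟨1/2, by norm_num, term_half hp0 α⟩
  exact le_csSup (bddAbove_term hpnn hpsum hα) hmem

/-! ### Upper bound: `p 1 = 0` forces `Ffun p α ≤ 0` for `α ≤ 1/2`. -/

lemma key_upper (hpnn : ∀ k, 0 ≤ p k) (hp0 : p 0 = 0) (hp1 : p 1 = 0)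
    (hpsum : ∑' k, p k = 1) {α : ℝ} (hα0 : 0 ≤ α) (hα : α ≤ 1/2)
    (γ : ℝ) (hγ : γ ∈ Set.Icc (0:ℝ) (1/2)) : term p α γ ≤ 1 := by
  obtain ⟨h0, h1⟩ := hγ
  set x : ℝ := 1 - 2 * γ with hx
  clear_value x
  have hx0 : (0:ℝ) ≤ x := by rw [hx]; linarith
  have hx1 : x ≤ 1 := by rw [hx]; linarith
  have hρ0 := rho_nonneg hpnn hx0
  have hρsq := rho_le_sq hpnn hp0 hp1 hpsum hx0 hx1
  rw [term, div_le_one (denom_pos γ ⟨h0, h1⟩), ← hx]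
  have hnum : (1 + rho p x) ^ α ≤ (1 + x ^ 2) ^ ((1:ℝ)/2) := by
    calc (1 + rho p x) ^ α ≤ (1 + x ^ 2) ^ α :=
          Real.rpow_le_rpow (by linarith) (by linarith) hα0
      _ ≤ (1 + x ^ 2) ^ ((1:ℝ)/2) :=
          Real.rpow_le_rpow_of_exponent_le (by nlinarith) hα
  refine le_trans hnum ?_
  rcases eq_or_lt_of_le h0 with h | h
  · -- γ = 0, x = 1
    have hγ0 : γ = 0 := h.symm
    have hx1' : x = 1 := by rw [hx, hγ0]; ring
    rw [hγ0, hx1']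
    have h2 : ((1:ℝ) + 1 ^ 2) ^ ((1:ℝ)/2) ≤ 2 := by
      have := Real.rpow_le_rpow_of_exponent_le (by norm_num : (1:ℝ) ≤ 1 + 1 ^ 2)
        (by norm_num : (1:ℝ)/2 ≤ 1)
      rw [Real.rpow_one] at this
      norm_num at this ⊢
      linarith
    simpa using h2
  · -- γ > 0
    have hxlt : x < 1 := by rw [hx]; linarith
    have h1γ : γ < 1 := by linarith
    rw [denom_exp h h1γ]
    rw [Real.rpow_def_of_pos (by nlinarith : (0:ℝ) < 1 + x ^ 2)]
    rw [Real.exp_le_exp]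
    -- reduce to the entropy inequality
    have hlogx : Real.log (1 + x ^ 2) ≤ x ^ 2 := by
      have := Real.log_le_sub_one_of_pos (by nlinarith : (0:ℝ) < 1 + x ^ 2)
      linarith
    have hB := lemB x ⟨hx0, hxlt⟩
    have hgx : γ = (1 - x)/2 := by rw [hx]; ring
    have h1g : 1 - γ = (1 + x)/2 := by rw [hx]; ring
    have hlogγ : Real.log γ = Real.log (1 - x) - Real.log 2 := by
      rw [hgx, Real.log_div (by linarith) (by norm_num)]
    have hlog1γ : Real.log (1 - γ) = Real.log (1 + x) - Real.log 2 := by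
      rw [h1g, Real.log_div (by nlinarith) (by norm_num)]
    rw [hlogγ, hlog1γ, h1g, hgx]
    nlinarith [hB, hlogx]

lemma Ffun_nonpos (hpnn : ∀ k, 0 ≤ p k) (hp0 : p 0 = 0) (hp1 : p 1 = 0)
    (hpsum : ∑' k, p k = 1) {α : ℝ} (hα0 : 0 ≤ α) (hα : α ≤ 1/2) :
    Ffun p α ≤ 0 := by
  rw [Ffun_eq]
  apply Real.log_nonpos
  · have := sSup_ge_one hpnn hp0 hpsum hα0
    linarith
  · have hne : (term p α '' Set.Icc 0 (1/2)).Nonempty :=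
      ⟨1, ⟨1/2, by norm_num, term_half hp0 α⟩⟩
    apply csSup_le hne
    rintro t ⟨γ, hγ, rfl⟩
    exact key_upper hpnn hp0 hp1 hpsum hα0 hα γ hγ

/-! ### Lower bounds on `Ffun`. -/

lemma Ffun_pos_of_term_gt (hpnn : ∀ k, 0 ≤ p k) (hpsum : ∑' k, p k = 1)
    {α : ℝ} (hα : 0 ≤ α) {γ : ℝ} (hγ : γ ∈ Set.Icc (0:ℝ) (1/2))
    (ht : 1 < term p α γ) : 0 < Ffun p α := by
  rw [Ffun_eq]
  apply Real.log_pos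
  exact lt_of_lt_of_le ht (le_csSup (bddAbove_term hpnn hpsum hα) ⟨γ, hγ, rfl⟩)

lemma Ffun_two_pos (hpnn : ∀ k, 0 ≤ p k) (hpsum : ∑' k, p k = 1) :
    0 < Ffun p 2 := by
  apply Ffun_pos_of_term_gt hpnn hpsum (by norm_num)
    (show (0:ℝ) ∈ Set.Icc (0:ℝ) (1/2) by norm_num)
  have h1 : (1:ℝ) - 2 * 0 = 1 := by norm_num
  rw [term, h1, rho_one hpsum]
  rw [show ((0:ℝ)) ^ ((0:ℝ)) = 1 from Real.rpow_zero 0]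
  rw [show ((1:ℝ) - 0) = 1 by norm_num, Real.one_rpow]
  rw [show ((1:ℝ) + 1) = 2 by norm_num]
  rw [show ((2:ℝ):ℝ) ^ (2:ℝ) = (2:ℝ) ^ (2:ℕ) by
    rw [← Real.rpow_natCast 2 2]; norm_num]
  norm_num

lemma exp_le_one_add_two_mul {u : ℝ} (h0 : 0 ≤ u) (h1 : u ≤ 1/2) :
    Real.exp u ≤ 1 + 2 * u := by
  have h2 : 1 - u ≤ Real.exp (-u) := by
    have := Real.add_one_le_exp (-u)
    linarith
  have h3 : Real.exp u * Real.exp (-u) = 1 := by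
    rw [← Real.exp_add]
    simp
  have h4 : 0 < Real.exp u := Real.exp_pos u
  have h5 : Real.exp u * (1 - u) ≤ 1 := by nlinarith
  nlinarith

set_option maxHeartbeats 1000000 in
lemma key_lower (hpnn : ∀ k, 0 ≤ p k) (hp0 : p 0 = 0) (hp1 : 0 < p 1)
    (hpsum : ∑' k, p k = 1) {α : ℝ} (hα0 : 0 < α) (hα1 : α ≤ 1) :
    0 < Ffun p α := by
  set q : ℝ := p 1 with hq
  clear_value q
  have hqpos : 0 < q := hp1
  have hq1 : q ≤ 1 := by rw [hq]; exact p1_le_one hpnn hpsum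
  set ε : ℝ := α * q / 16 with hε
  clear_value ε
  have hε0 : 0 < ε := by rw [hε]; positivity
  have hε1 : ε ≤ 1/16 := by rw [hε]; nlinarith
  set γ : ℝ := 1/2 - ε with hγdef
  clear_value γ
  have hγmem : γ ∈ Set.Icc (0:ℝ) (1/2) := by
    constructor <;> (rw [hγdef]; linarith)
  apply Ffun_pos_of_term_gt hpnn hpsum hα0.le hγmem
  set x : ℝ := 2 * ε with hxdef
  clear_value x
  have hx12 : 1 - 2 * γ = x := by rw [hγdef, hxdef]; ring
  have hx0 : 0 < x := by rw [hxdef]; positivity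
  have hx18 : x ≤ 1/8 := by rw [hxdef]; linarith
  have hγ0 : 0 < γ := by rw [hγdef]; linarith
  have hγ1 : γ < 1 := by rw [hγdef]; linarith
  -- numerator lower bound
  have hρ : q * x ≤ rho p x := by rw [hq]; exact rho_ge_p1 hpnn hpsum hx0.le (by linarith)
  have hρ0 : 0 ≤ rho p x := rho_nonneg hpnn hx0.le
  have hqx : 0 < q * x := by positivity
  have hlog1 : Real.log (1 + q * x) ≤ Real.log (1 + rho p x) :=
    Real.log_le_log (by linarith) (by linarith)
  have hlog2 : (q * x) / (1 + q * x) ≤ Real.log (1 + q * x) :=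
    log_one_add_ge (q * x) hqx.le
  have hqx1 : q * x ≤ 1 := by nlinarith
  have hlog3 : q * ε ≤ (q * x) / (1 + q * x) := by
    rw [le_div_iff₀ (by linarith)]
    have hqe : q * ε ≤ 1/16 := by nlinarith
    have hu : 0 < q * ε := mul_pos hqpos hε0
    rw [hxdef]
    nlinarith [hqe, hu]
  have hnum : 1 + α * (q * ε) ≤ (1 + rho p x) ^ α := by
    rw [Real.rpow_def_of_pos (by linarith)]
    have h5 : Real.log (1 + rho p x) * α + 1 ≤ Real.exp (Real.log (1 + rho p x) * α) :=
      Real.add_one_le_exp _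
    have h6 : q * ε ≤ Real.log (1 + rho p x) := by linarith
    nlinarith
  -- denominator upper bound
  have hlx : Real.log (1 + x) ≤ x := by
    have := Real.log_le_sub_one_of_pos (by linarith : (0:ℝ) < 1 + x)
    linarith
  have hlmx : Real.log (1 - x) ≤ -x := by
    have := Real.log_le_sub_one_of_pos (by linarith : (0:ℝ) < 1 - x)
    linarith
  have hgx : γ = (1 - x)/2 := by rw [hγdef, hxdef]; ring
  have h1g : 1 - γ = (1 + x)/2 := by rw [hγdef, hxdef]; ring
  have hlogγ : Real.log γ = Real.log (1 - x) - Real.log 2 := by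
    rw [hgx, Real.log_div (by linarith) (by norm_num)]
  have hlog1γ : Real.log (1 - γ) = Real.log (1 + x) - Real.log 2 := by
    rw [h1g, Real.log_div (by linarith) (by norm_num)]
  have hE : Real.log 2 + Real.log γ * γ + Real.log (1 - γ) * (1 - γ) ≤ x ^ 2 := by
    rw [hlogγ, hlog1γ, h1g, hgx]
    nlinarith [mul_le_mul_of_nonneg_left hlmx (by linarith : (0:ℝ) ≤ 1 - x),
      mul_le_mul_of_nonneg_left hlx (by linarith : (0:ℝ) ≤ 1 + x)]
  have hdenom : 2 * γ ^ γ * (1 - γ) ^ (1 - γ) ≤ 1 + 8 * ε ^ 2 := by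
    rw [denom_exp hγ0 hγ1]
    have h7 : Real.exp (Real.log 2 + Real.log γ * γ + Real.log (1 - γ) * (1 - γ))
        ≤ Real.exp (x ^ 2) := Real.exp_le_exp.mpr hE
    have h8 : Real.exp (x ^ 2) ≤ 1 + 2 * x ^ 2 := by
      apply exp_le_one_add_two_mul (by positivity)
      nlinarith
    have h9 : 2 * x ^ 2 = 8 * ε ^ 2 := by rw [hxdef]; ring
    linarith
  -- conclusion
  have hdpos := denom_pos γ hγmem
  have hcmp : 2 * γ ^ γ * (1 - γ) ^ (1 - γ) < 1 + α * (q * ε) := by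
    have h10 : 8 * ε ^ 2 < α * (q * ε) := by
      have : 8 * ε = α * q / 2 := by rw [hε]; ring
      nlinarith
    linarith
  rw [term, hx12, one_lt_div hdpos]
  calc 2 * γ ^ γ * (1 - γ) ^ (1 - γ) < 1 + α * (q * ε) := hcmp
    _ ≤ (1 + rho p x) ^ α := hnum

end Main

end Stmt1Aux

theorem stmt1 (p : ℕ → ℝ) (hpnn : ∀ k, 0 ≤ p k) (hp0 : p 0 = 0)
    (hpsum : ∑' k, p k = 1) :
    alphaStar p = 0 ↔ 0 < p 1 := by
  constructor
  · intro h
    by_contra hc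
    push_neg at hc
    have hp1 : p 1 = 0 := le_antisymm hc (hpnn 1)
    have hlb : (1:ℝ)/2 ≤ alphaStar p := by
      have h2m : (2:ℝ) ∈ {α : ℝ | 0 ≤ α ∧ 0 < Ffun p α} :=
        ⟨by norm_num, Stmt1Aux.Ffun_two_pos hpnn hpsum⟩
      apply le_csInf ⟨2, h2m⟩
      intro b hb
      by_contra hb2
      push_neg at hb2
      exact absurd hb.2
        (not_lt.mpr (Stmt1Aux.Ffun_nonpos hpnn hp0 hp1 hpsum hb.1 (le_of_lt hb2)))
    rw [h] at hlb
    norm_num at hlb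
  · intro hp1
    have hbdd : BddBelow {α : ℝ | 0 ≤ α ∧ 0 < Ffun p α} := ⟨0, fun b hb => hb.1⟩
    have hmem : ∀ α : ℝ, 0 < α → α ≤ 1 → α ∈ {α : ℝ | 0 ≤ α ∧ 0 < Ffun p α} :=
      fun α h1 h2 => ⟨le_of_lt h1, Stmt1Aux.key_lower hpnn hp0 hp1 hpsum h1 h2⟩
    have hub : ∀ α : ℝ, 0 < α → α ≤ 1 → alphaStar p ≤ α :=
      fun α h1 h2 => csInf_le hbdd (hmem α h1 h2)
    have hge : 0 ≤ alphaStar p :=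
      le_csInf ⟨1, hmem 1 one_pos le_rfl⟩ (fun b hb => hb.1)
    by_contra hne
    have hpos : 0 < alphaStar p := lt_of_le_of_ne hge (Ne.symm hne)
    have h1 := hub (min 1 (alphaStar p / 2))
      (lt_min one_pos (by linarith)) (min_le_left _ _)
    have h2 : min 1 (alphaStar p / 2) ≤ alphaStar p / 2 := min_le_right _ _
    linarith
end

section
/- Let W be a random variable taking values in ℕ = {1,2,...} with probability generating function ρ(s) = E[s^W]. If P[W = 2] = 1 (so ρ(s) = s²), then α*_ρ = 1/2. -/
open Filter Topology Set

private lemma mono_aux {f f' : ℝ → ℝ}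
    (hd : ∀ x ∈ Set.Ico (0:ℝ) 1, HasDerivAt f (f' x) x)
    (hnn : ∀ x ∈ Set.Ioo (0:ℝ) 1, 0 ≤ f' x) {t : ℝ} (ht : t ∈ Set.Ico (0:ℝ) 1) :
    f 0 ≤ f t := by
  have hmono : MonotoneOn f (Set.Ico (0:ℝ) 1) := by
    apply monotoneOn_of_deriv_nonneg (convex_Ico 0 1)
    · exact fun x hx => (hd x hx).continuousAt.continuousWithinAt
    · intro x hx
      rw [interior_Ico] at hx
      exact (hd x (Ioo_subset_Ico_self hx)).differentiableAt.differentiableWithinAt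
    · intro x hx
      rw [interior_Ico] at hx
      rw [(hd x (Ioo_subset_Ico_self hx)).deriv]
      exact hnn x hx
  exact hmono (Set.left_mem_Ico.2 one_pos) ht ht.1

private lemma deriv1 {t : ℝ} (ht : t ∈ Set.Ico (0:ℝ) 1) :
    HasDerivAt (fun t : ℝ => Real.log (1+t) - Real.log (1-t) - 2*t)
      (1/(1+t) + 1/(1-t) - 2) t := by
  have h1 : (0:ℝ) < 1 + t := by linarith [ht.1]
  have h2 : (0:ℝ) < 1 - t := by linarith [ht.2]
  have d1 : HasDerivAt (fun t : ℝ => Real.log (1+t)) (1/(1+t)) t := by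
    simpa using ((hasDerivAt_id t).const_add 1).log h1.ne'
  have d2 : HasDerivAt (fun t : ℝ => Real.log (1-t)) (-(1/(1-t))) t := by
    have : HasDerivAt (fun t : ℝ => 1 - t) (-1) t := by
      simpa using ((hasDerivAt_id t).const_sub 1)
    simpa [neg_div] using this.log h2.ne'
  have d3 : HasDerivAt (fun t : ℝ => 2*t) 2 t := by
    simpa using (hasDerivAt_id t).const_mul 2
  have := (d1.sub d2).sub d3
  refine this.congr_deriv ?_
  ring

private lemma deriv2 {t : ℝ} (ht : t ∈ Set.Ico (0:ℝ) 1) :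
    HasDerivAt (fun t : ℝ => (1-t)*Real.log (1-t) + (1+t)*Real.log (1+t) - t^2)
      (Real.log (1+t) - Real.log (1-t) - 2*t) t := by
  have h1 : (0:ℝ) < 1 + t := by linarith [ht.1]
  have h2 : (0:ℝ) < 1 - t := by linarith [ht.2]
  have dm : HasDerivAt (fun t : ℝ => 1 - t) (-1) t := by
    simpa using ((hasDerivAt_id t).const_sub 1)
  have dp : HasDerivAt (fun t : ℝ => 1 + t) 1 t := by
    simpa using ((hasDerivAt_id t).const_add 1)
  have d1 : HasDerivAt (fun t : ℝ => (1-t)*Real.log (1-t))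
      ((-1) * Real.log (1-t) + (1-t) * (-1/(1-t))) t :=
    dm.mul (by simpa [neg_div] using dm.log h2.ne')
  have d2 : HasDerivAt (fun t : ℝ => (1+t)*Real.log (1+t))
      (1 * Real.log (1+t) + (1+t) * (1/(1+t))) t :=
    dp.mul (by simpa using dp.log h1.ne')
  have d3 : HasDerivAt (fun t : ℝ => t^2) (2*t) t := by
    simpa using (hasDerivAt_pow 2 t)
  have := (d1.add d2).sub d3
  refine this.congr_deriv ?_
  field_simp
  ring

/-- key convexity inequality: `t² ≤ (1-t)log(1-t) + (1+t)log(1+t)` on `[0,1)`. -/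
private lemma lemmaA {t : ℝ} (ht : t ∈ Set.Ico (0:ℝ) 1) :
    t^2 ≤ (1-t)*Real.log (1-t) + (1+t)*Real.log (1+t) := by
  have step1 : ∀ x ∈ Set.Ico (0:ℝ) 1, 0 ≤ Real.log (1+x) - Real.log (1-x) - 2*x := by
    intro x hx
    have h0 : (fun t : ℝ => Real.log (1+t) - Real.log (1-t) - 2*t) 0 = 0 := by simp
    have := mono_aux (fun y hy => deriv1 hy) ?_ hx
    · simpa [h0] using this
    · intro y hy
      have h1 : (0:ℝ) < 1 + y := by linarith [hy.1]
      have h2 : (0:ℝ) < 1 - y := by linarith [hy.2]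
      have key : 1/(1+y) + 1/(1-y) = 2/((1+y)*(1-y)) := by field_simp; ring
      have h12 : (0:ℝ) < (1+y)*(1-y) := mul_pos h1 h2
      have : (2:ℝ) ≤ 2/((1+y)*(1-y)) := by
        rw [le_div_iff₀ h12]
        nlinarith [sq_nonneg y, hy.1.le]
      linarith [key ▸ this]
  have := mono_aux (fun y hy => deriv2 hy) (fun y hy => step1 y (Ioo_subset_Ico_self hy)) ht
  simpa using this

private lemma denom_pos {γ : ℝ} (h0 : 0 ≤ γ) (h1 : γ ≤ 1/2) :
    0 < 2 * γ^γ * (1-γ)^(1-γ) := by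
  have h2 : (0:ℝ) < (1-γ)^(1-γ) := Real.rpow_pos_of_pos (by linarith) _
  have h3 : (0:ℝ) < γ^γ := by
    rcases eq_or_lt_of_le h0 with h | h
    · rw [← h, Real.rpow_zero]; norm_num
    · exact Real.rpow_pos_of_pos h _
  positivity

private lemma exp_neg_one_le {γ : ℝ} (h0 : 0 ≤ γ) (h1 : γ ≤ 1) :
    Real.exp (-1) ≤ γ^γ := by
  rcases eq_or_lt_of_le h0 with h | h
  · rw [← h, Real.rpow_zero]
    calc Real.exp (-1) ≤ Real.exp 0 := Real.exp_le_exp.2 (by norm_num)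
    _ = 1 := Real.exp_zero
  · rw [Real.rpow_def_of_pos h]
    apply Real.exp_le_exp.2
    have := Real.one_sub_inv_le_log_of_pos h
    have h2 : (1 - γ⁻¹) * γ ≤ Real.log γ * γ := by
      apply mul_le_mul_of_nonneg_right this h0
    have h3 : (1 - γ⁻¹) * γ = γ - 1 := by field_simp
    nlinarith

private lemma num_le {α γ : ℝ} (hα : 0 ≤ α) (h0 : 0 ≤ γ) (h1 : γ ≤ 1/2) :
    (1 + (1-2*γ)^2) ^ α ≤ (2:ℝ)^α := by
  apply Real.rpow_le_rpow (by positivity) (by nlinarith) hα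

private lemma key_half {t : ℝ} (ht0 : 0 ≤ t) (ht1 : t < 1) :
    Real.log (1+t^2) * (1/2) ≤
      Real.log 2 + Real.log ((1-t)/2) * ((1-t)/2) + Real.log ((1+t)/2) * ((1+t)/2) := by
  rw [Real.log_div (by linarith) two_ne_zero, Real.log_div (by linarith) two_ne_zero]
  have hA := lemmaA ⟨ht0, ht1⟩
  have hB : Real.log (1+t^2) ≤ t^2 := by
    have := Real.log_le_sub_one_of_pos (by positivity : (0:ℝ) < 1+t^2)
    linarith
  nlinarith [hA, hB]

private lemma key_gt {α t : ℝ} (hα : 1/2 < α) (ht0 : 0 < t) (ht2 : t ≤ 1/2)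
    (htm : t ≤ (α - 1/2)/4) :
    Real.log 2 + Real.log ((1-t)/2) * ((1-t)/2) + Real.log ((1+t)/2) * ((1+t)/2) <
      Real.log (1+t^2) * α := by
  have h1t : (0:ℝ) < 1 - t := by linarith
  have h1t' : (0:ℝ) < 1 + t := by linarith
  rw [Real.log_div h1t.ne' two_ne_zero, Real.log_div h1t'.ne' two_ne_zero]
  set a := Real.log (1-t) with ha_def
  set b := Real.log (1+t) with hb_def
  set L := Real.log (1+t^2) with hL_def
  -- bounds
  have hb : b ≤ t := by
    have := Real.log_le_sub_one_of_pos h1t'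
    simp only [← hb_def] at this; linarith
  have ha : 1 - (1-t)⁻¹ ≤ a := Real.one_sub_inv_le_log_of_pos h1t
  have hsum : a + b ≤ -t^2 := by
    have hmul : a + b = Real.log ((1-t)*(1+t)) := (Real.log_mul h1t.ne' h1t'.ne').symm
    have := Real.log_le_sub_one_of_pos (mul_pos h1t h1t')
    rw [← hmul] at this; nlinarith
  have hL : t^2/(1+t^2) ≤ L := by
    have := Real.one_sub_inv_le_log_of_pos (by positivity : (0:ℝ) < 1+t^2)
    have e : 1 - (1+t^2)⁻¹ = t^2/(1+t^2) := by field_simp; ring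
    rw [e] at this; exact this
  -- combine
  have hainv : (1-t)⁻¹ = 1 + t/(1-t) := by field_simp; ring
  have hstep : a * ((1-t)/2) + b * ((1+t)/2) ≤ -t^2/2 + (t/2)*(t + t/(1-t)) := by
    have hba : b - a ≤ t + t/(1-t) := by rw [hainv] at ha; linarith
    have h1 : a * ((1-t)/2) + b * ((1+t)/2) = (a+b)/2 + (t/2)*(b-a) := by ring
    rw [h1]
    have h2 : (t/2)*(b-a) ≤ (t/2)*(t + t/(1-t)) :=
      mul_le_mul_of_nonneg_left hba (by linarith)
    linarith
  have heq : -t^2/2 + (t/2)*(t + t/(1-t)) = t^2/(2*(1-t)) := by field_simp; ring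
  have hfin : t^2/(2*(1-t)) < α * t^2/(1+t^2) := by
    rw [div_lt_div_iff₀ (by positivity) (by positivity)]
    nlinarith [mul_nonneg (mul_nonneg (sq_nonneg t) (by linarith : (0:ℝ) ≤ α - 4*t - 1/2)) h1t.le,
      mul_pos (mul_pos ht0 ht0) ht0]
  have hαL : α * (t^2/(1+t^2)) ≤ α * L := mul_le_mul_of_nonneg_left hL (by linarith)
  have hma : α * t^2/(1+t^2) = α * (t^2/(1+t^2)) := by ring
  rw [hma] at hfin
  linarith [hstep, heq ▸ hstep]

-- denominator as exponential, for γ ∈ (0, 1/2]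
private lemma denom_exp {γ : ℝ} (h0 : 0 < γ) (h1 : γ ≤ 1/2) :
    2 * γ^γ * (1-γ)^(1-γ) =
      Real.exp (Real.log 2 + Real.log γ * γ + Real.log (1-γ) * (1-γ)) := by
  rw [Real.exp_add, Real.exp_add, Real.exp_log two_pos,
    ← Real.rpow_def_of_pos h0, ← Real.rpow_def_of_pos (by linarith : (0:ℝ) < 1-γ)]

private lemma g_le_one {α γ : ℝ} (hα0 : 0 ≤ α) (hα : α ≤ 1/2) (h0 : 0 ≤ γ) (h1 : γ ≤ 1/2) :
    (1 + (1-2*γ)^2) ^ α / (2 * γ^γ * (1-γ)^(1-γ)) ≤ 1 := by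
  have hD := denom_pos h0 h1
  rw [div_le_one hD]
  have hb1 : (1:ℝ) ≤ 1 + (1-2*γ)^2 := by nlinarith [sq_nonneg (1-2*γ)]
  have step1 : (1 + (1-2*γ)^2) ^ α ≤ (1 + (1-2*γ)^2) ^ (1/2 : ℝ) :=
    Real.rpow_le_rpow_of_exponent_le hb1 hα
  refine step1.trans ?_
  rcases eq_or_lt_of_le h0 with h | h
  · -- γ = 0
    subst h
    norm_num
    calc (2:ℝ) ^ (1/2:ℝ) ≤ 2 ^ (1:ℝ) :=
          Real.rpow_le_rpow_of_exponent_le (by norm_num) (by norm_num)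
    _ = 2 := Real.rpow_one 2
  · -- γ > 0
    set t := 1 - 2*γ with ht_def
    have ht0 : 0 ≤ t := by simp only [ht_def]; linarith
    have ht1 : t < 1 := by simp only [ht_def]; linarith
    have hbpos : (0:ℝ) < 1 + t^2 := by positivity
    rw [Real.rpow_def_of_pos hbpos, denom_exp h h1]
    apply Real.exp_le_exp.2
    have hγt : γ = (1-t)/2 := by simp only [ht_def]; ring
    have h1γt : 1 - γ = (1+t)/2 := by simp only [ht_def]; ring
    rw [h1γt, hγt]
    exact key_half ht0 ht1

private lemma g_half : ∀ α : ℝ,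
    (1 + (1-2*(1/2:ℝ))^2) ^ α / (2 * (1/2:ℝ)^(1/2:ℝ) * (1-(1/2:ℝ))^(1-(1/2:ℝ))) = 1 := by
  intro α
  have e1 : (1 + (1-2*(1/2:ℝ))^2) = 1 := by norm_num
  rw [e1, Real.one_rpow]
  have h12 : (1:ℝ)-(1/2:ℝ) = 1/2 := by norm_num
  rw [h12, mul_assoc, ← Real.rpow_add (by norm_num : (0:ℝ) < 1/2)]
  have h11 : (1/2:ℝ)+(1/2:ℝ) = 1 := by norm_num
  rw [h11, Real.rpow_one]
  norm_num

private lemma g_gt_one {α : ℝ} (hα : 1/2 < α) :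
    ∃ γ ∈ Icc (0:ℝ) (1/2),
      1 < (1 + (1-2*γ)^2) ^ α / (2 * γ^γ * (1-γ)^(1-γ)) := by
  set t := min (1/2 : ℝ) ((α - 1/2)/4) with ht_def
  have ht0 : 0 < t := lt_min (by norm_num) (by linarith)
  have ht2 : t ≤ 1/2 := min_le_left _ _
  have htm : t ≤ (α - 1/2)/4 := min_le_right _ _
  refine ⟨(1-t)/2, ⟨by linarith, by linarith⟩, ?_⟩
  have h0 : (0:ℝ) < (1-t)/2 := by linarith
  have h1 : (1-t)/2 ≤ 1/2 := by linarith
  have hD := denom_pos h0.le h1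
  rw [lt_div_iff₀ hD, one_mul]
  have he : 1 - 2*((1-t)/2) = t := by ring
  have h1γ : 1 - (1-t)/2 = (1+t)/2 := by ring
  rw [he, denom_exp h0 h1, h1γ, Real.rpow_def_of_pos (by positivity : (0:ℝ) < 1 + t^2)]
  exact Real.exp_lt_exp.2 (key_gt hα ht0 ht2 htm)

theorem stmt2 (p : ℕ → ℝ) (hpnn : ∀ k, 0 ≤ p k) (hp0 : p 0 = 0)
    (hpsum : ∑' k, p k = 1) (hp2 : p 2 = 1) :
    alphaStar p = 1 / 2 := by
  -- the pmf is the point mass at 2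
  have hsumm : Summable p := by
    by_contra h
    rw [tsum_eq_zero_of_not_summable h] at hpsum
    norm_num at hpsum
  have hpk : ∀ k, k ≠ 2 → p k = 0 := by
    intro k hk
    by_contra h
    have hklt : p 2 + p k ≤ ∑' k, p k := by
      have := Summable.sum_le_tsum ({2, k} : Finset ℕ) (fun i _ => hpnn i) hsumm
      rwa [Finset.sum_pair (Ne.symm hk)] at this
    have : 0 < p k := lt_of_le_of_ne (hpnn k) (Ne.symm h)
    rw [hpsum, hp2] at hklt
    linarith
  have hrho : ∀ s : ℝ, rho p s = s ^ 2 := by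
    intro s
    rw [rho, tsum_eq_single 2 (fun k hk => by rw [hpk k hk, zero_mul]), hp2, one_mul]
  -- rewrite Ffun
  have hFeq : ∀ α : ℝ, Ffun p α = Real.log (sSup ((fun γ : ℝ =>
      (1 + (1 - 2*γ)^2) ^ α / (2 * γ^γ * (1-γ)^(1-γ))) '' Set.Icc 0 (1/2))) := by
    intro α
    rw [Ffun]
    simp only [hrho]
  have hhalf_mem : (1/2 : ℝ) ∈ Set.Icc (0:ℝ) (1/2) := by constructor <;> norm_num
  have hne : ∀ α : ℝ, ((fun γ : ℝ =>
      (1 + (1 - 2*γ)^2) ^ α / (2 * γ^γ * (1-γ)^(1-γ))) '' Set.Icc 0 (1/2)).Nonempty :=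
    fun α => ⟨_, Set.mem_image_of_mem _ hhalf_mem⟩
  have hbdd : ∀ α : ℝ, 0 ≤ α → BddAbove ((fun γ : ℝ =>
      (1 + (1 - 2*γ)^2) ^ α / (2 * γ^γ * (1-γ)^(1-γ))) '' Set.Icc 0 (1/2)) := by
    intro α hα
    refine ⟨(2:ℝ)^α / (2 * Real.exp (-1) * Real.exp (-1)), ?_⟩
    rintro x ⟨γ, hγ, rfl⟩
    have hd1 : Real.exp (-1) ≤ γ^γ := exp_neg_one_le hγ.1 (by linarith [hγ.2])
    have hd2 : Real.exp (-1) ≤ (1-γ)^(1-γ) :=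
      exp_neg_one_le (by linarith [hγ.2]) (by linarith [hγ.1])
    have hepos : (0:ℝ) < Real.exp (-1) := Real.exp_pos _
    have hee : (0:ℝ) < 2 * Real.exp (-1) * Real.exp (-1) := by positivity
    have hdb : 2 * Real.exp (-1) * Real.exp (-1) ≤ 2 * γ^γ * (1-γ)^(1-γ) := by
      have := mul_le_mul hd1 hd2 hepos.le (le_trans hepos.le hd1)
      nlinarith
    exact div_le_div₀ (by positivity) (num_le hα hγ.1 hγ.2) hee hdb
  have hone_le : ∀ α : ℝ, 0 ≤ α → (1:ℝ) ≤ sSup ((fun γ : ℝ =>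
      (1 + (1 - 2*γ)^2) ^ α / (2 * γ^γ * (1-γ)^(1-γ))) '' Set.Icc 0 (1/2)) := by
    intro α hα
    have := le_csSup (hbdd α hα) (Set.mem_image_of_mem _ hhalf_mem)
    rwa [g_half α] at this
  -- the set is exactly (1/2, ∞)
  have hS : {α : ℝ | 0 ≤ α ∧ 0 < Ffun p α} = Set.Ioi (1/2 : ℝ) := by
    ext α
    simp only [Set.mem_setOf_eq, Set.mem_Ioi]
    constructor
    · rintro ⟨hα0, hαF⟩
      by_contra h
      push_neg at h
      have hle : Ffun p α ≤ 0 := by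
        rw [hFeq]
        apply Real.log_nonpos (by linarith [hone_le α hα0])
        apply csSup_le (hne α)
        rintro x ⟨γ, hγ, rfl⟩
        exact g_le_one hα0 h hγ.1 hγ.2
      linarith
    · intro hα
      have hα0 : (0:ℝ) ≤ α := by linarith
      refine ⟨hα0, ?_⟩
      rw [hFeq]
      apply Real.log_pos
      obtain ⟨γ, hγ, hγgt⟩ := g_gt_one hα
      exact hγgt.trans_le (le_csSup (hbdd α hα0) (Set.mem_image_of_mem _ hγ))
  rw [alphaStar, hS, csInf_Ioi]
end

section
/- Let π_n(m) denote the probability that all n components of a multinomial (m; 1/n, ..., 1/n) random vector are even. Suppose m_n is even for each n and m_n/n → α ∈ (0,∞) as n → ∞, where α = λ tanh λ for some λ > 0. Then lim_{n→∞} n^{−1} log π_n(m_n) = log cosh λ − (λ tanh λ)(1 − log tanh λ). -/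
open Filter Topology

/-- `π_n(m)`: the probability that all `n` components of a multinomial
`(m; 1/n, …, 1/n)` random vector are even, i.e. that after throwing `m` balls
independently and uniformly into `n` urns, every urn contains an even number
of balls. -/
noncomputable def piProb (n m : ℕ) : ℝ :=
  ((Finset.univ.filter (fun f : Fin m → Fin n =>
      ∀ j, Even ((Finset.univ.filter (fun i => f i = j)).card))).card : ℝ) /
    (n : ℝ) ^ m

-- Step 1: character identity
lemma count_mul_two_pow (n mm : ℕ) :
    ((Finset.univ.filter (fun f : Fin mm → Fin n =>
      ∀ j, Even ((Finset.univ.filter (fun i => f i = j)).card))).card : ℝ) * 2 ^ n =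
    ∑ ε : Fin n → Bool, (∑ j, (if ε j then (1:ℝ) else -1)) ^ mm := by
  have expand : ∀ ε : Fin n → Bool,
      (∑ j, (if ε j then (1:ℝ) else -1)) ^ mm
      = ∑ f : Fin mm → Fin n, ∏ i, (if ε (f i) then (1:ℝ) else -1) :=
    fun ε => Fintype.sum_pow (fun j => if ε j then (1:ℝ) else -1) mm
  rw [Finset.sum_congr rfl (fun ε _ => expand ε), Finset.sum_comm]
  symm
  have fiber : ∀ (f : Fin mm → Fin n) (ε : Fin n → Bool),
      ∏ i, (if ε (f i) then (1:ℝ) else -1)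
      = ∏ j, (if ε j then (1:ℝ) else -1) ^ ((Finset.univ.filter (fun i => f i = j)).card) := by
    intro f ε
    rw [← Finset.prod_fiberwise Finset.univ f (fun i => if ε (f i) then (1:ℝ) else -1)]
    refine Finset.prod_congr rfl (fun j _ => ?_)
    rw [Finset.prod_congr rfl (fun i hi => by
      simp only [Finset.mem_filter] at hi
      rw [hi.2]), Finset.prod_const]
  have inner : ∀ f : Fin mm → Fin n,
      ∑ ε : Fin n → Bool, ∏ j, (if ε j then (1:ℝ) else -1) ^ ((Finset.univ.filter (fun i => f i = j)).card)
      = ∏ j, ((1:ℝ) + (-1) ^ ((Finset.univ.filter (fun i => f i = j)).card)) := by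
    intro f
    rw [← Fintype.prod_sum (fun j (b : Bool) => (if b then (1:ℝ) else -1) ^ ((Finset.univ.filter (fun i => f i = j)).card))]
    refine Finset.prod_congr rfl (fun j _ => ?_)
    simp [Fintype.sum_bool]
  calc ∑ f : Fin mm → Fin n, ∑ ε : Fin n → Bool, ∏ i, (if ε (f i) then (1:ℝ) else -1)
      = ∑ f : Fin mm → Fin n, ∏ j, ((1:ℝ) + (-1) ^ ((Finset.univ.filter (fun i => f i = j)).card)) := by
        refine Finset.sum_congr rfl (fun f _ => ?_)
        rw [Finset.sum_congr rfl (fun ε _ => fiber f ε), inner f]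
    _ = ∑ f : Fin mm → Fin n, (if (∀ j, Even ((Finset.univ.filter (fun i => f i = j)).card)) then (2:ℝ)^n else 0) := by
        refine Finset.sum_congr rfl (fun f _ => ?_)
        by_cases h : ∀ j, Even ((Finset.univ.filter (fun i => f i = j)).card)
        · rw [if_pos h]
          rw [Finset.prod_congr rfl (fun j _ => by rw [(h j).neg_one_pow]), Finset.prod_const]
          norm_num
        · rw [if_neg h]
          push_neg at h
          obtain ⟨j, hj⟩ := h
          refine Finset.prod_eq_zero (Finset.mem_univ j) ?_
          rw [(Nat.not_even_iff_odd.mp hj).neg_one_pow]; ring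
    _ = _ := by
        rw [Finset.sum_ite, Finset.sum_const, Finset.sum_const_zero, add_zero, nsmul_eq_mul]

def boolEquivFinset (n : ℕ) : (Fin n → Bool) ≃ Finset (Fin n) where
  toFun := fun ε => Finset.univ.filter (fun j => ε j)
  invFun := fun s j => decide (j ∈ s)
  left_inv := fun ε => by funext j; simp
  right_inv := fun s => by ext j; simp

lemma count_eq_finset_sum (n mm : ℕ) (hm : Even mm) :
    ((Finset.univ.filter (fun f : Fin mm → Fin n =>
      ∀ j, Even ((Finset.univ.filter (fun i => f i = j)).card))).card : ℝ) * 2 ^ n =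
    ∑ s : Finset (Fin n), ((n : ℝ) - 2 * s.card) ^ mm := by
  rw [count_mul_two_pow]
  refine Fintype.sum_equiv (boolEquivFinset n) _ _ (fun ε => ?_)
  have hsum : (∑ j, (if ε j then (1:ℝ) else -1))
      = 2 * ((Finset.univ.filter (fun j => ε j)).card : ℝ) - n := by
    rw [Finset.sum_ite, Finset.sum_const, Finset.sum_const, nsmul_eq_mul, nsmul_eq_mul]
    have hcard := Finset.card_filter_add_card_filter_not (s := (Finset.univ : Finset (Fin n)))
      (p := fun j => ε j = true)
    simp only [Finset.card_univ, Fintype.card_fin] at hcard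
    have : ((Finset.univ.filter (fun j => ¬ ε j = true)).card : ℝ)
        = n - ((Finset.univ.filter (fun j => ε j = true)).card : ℝ) := by
      have := congrArg (fun x : ℕ => (x : ℝ)) hcard
      push_cast at this
      linarith
    rw [this]; ring
  rw [hsum]
  have : (2 * ((Finset.univ.filter (fun j => ε j)).card : ℝ) - n)
      = -((n : ℝ) - 2 * ((boolEquivFinset n ε).card : ℝ)) := by
    simp only [boolEquivFinset, Equiv.coe_fn_mk]
    ring
  rw [this, hm.neg_pow]

lemma piProb_eq (n mm : ℕ) (hm : Even mm) :
    piProb n mm = (∑ s : Finset (Fin n), ((n : ℝ) - 2 * s.card) ^ mm) / (2 ^ n * (n:ℝ) ^ mm) := by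
  rw [piProb, ← count_eq_finset_sum n mm hm, mul_comm ((2:ℝ) ^ n) ((n:ℝ) ^ mm),
    mul_div_mul_right _ _ (by positivity : ((2:ℝ) ^ n) ≠ 0)]

lemma exp_sum_finset (n : ℕ) (c : ℝ) :
    ∑ s : Finset (Fin n), Real.exp (c * ((n:ℝ) - 2 * s.card)) =
      (Real.exp (-c) + Real.exp c) ^ n := by
  have h := Fintype.prod_add (fun _ : Fin n => Real.exp (-c)) (fun _ : Fin n => Real.exp c)
  rw [Finset.prod_const, Finset.card_univ, Fintype.card_fin] at h
  rw [h]
  refine Finset.sum_congr rfl (fun s _ => ?_)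
  rw [Finset.prod_const, Finset.prod_const, Finset.card_compl, Fintype.card_fin,
    ← Real.exp_nat_mul, ← Real.exp_nat_mul, ← Real.exp_add]
  congr 1
  rw [Nat.cast_sub (Finset.card_le_univ s |>.trans_eq (by simp))]
  ring

lemma sum_upper (n mm : ℕ) (hm : Even mm) (hm1 : 1 ≤ mm) (t : ℝ) (ht : 0 < t) (hn : 1 ≤ n) :
    ∑ s : Finset (Fin n), ((n:ℝ) - 2 * s.card) ^ mm ≤
      (t * n) ^ mm * Real.exp (-(mm:ℝ)) * (2 * (2 * Real.cosh ((mm:ℝ) / (t * n))) ^ n) := by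
  have hn' : (0:ℝ) < n := by exact_mod_cast hn
  have htn : (0:ℝ) < t * n := by positivity
  set c : ℝ := (mm:ℝ) / (t * n) with hc
  have hterm : ∀ u : ℝ, u ^ mm ≤
      (t * n) ^ mm * Real.exp (-(mm:ℝ)) * (Real.exp (c * u) + Real.exp (-(c * u))) := by
    intro u
    rw [← hm.pow_abs]
    rcases eq_or_lt_of_le (abs_nonneg u) with h0 | hpos
    · rw [← h0, zero_pow (by omega)]
      positivity
    · have key : |u| ^ mm ≤ (t * n) ^ mm * Real.exp (-(mm:ℝ)) * Real.exp (c * |u|) := by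
        have hlog : Real.log (|u| / (t * n)) ≤ |u| / (t * n) - 1 :=
          Real.log_le_sub_one_of_pos (by positivity)
        rw [Real.log_div (ne_of_gt hpos) (ne_of_gt htn)] at hlog
        have h1 : |u| ^ mm = Real.exp ((mm:ℝ) * Real.log |u|) := by
          rw [← Real.log_pow, Real.exp_log (pow_pos hpos mm)]
        have h2 : (mm:ℝ) * Real.log |u| ≤
            (mm:ℝ) * Real.log (t * n) + (-(mm:ℝ) + c * |u|) := by
          have hmm : (0:ℝ) ≤ mm := by positivity
          have : Real.log |u| ≤ Real.log (t * n) + (|u| / (t * n) - 1) := by linarith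
          have h3 := mul_le_mul_of_nonneg_left this hmm
          rw [hc]
          calc (mm:ℝ) * Real.log |u| ≤ (mm:ℝ) * (Real.log (t * n) + (|u| / (t * n) - 1)) := h3
            _ = (mm:ℝ) * Real.log (t * n) + (-(mm:ℝ) + (mm:ℝ) / (t * n) * |u|) := by ring
        calc |u| ^ mm = Real.exp ((mm:ℝ) * Real.log |u|) := h1
          _ ≤ Real.exp ((mm:ℝ) * Real.log (t * n) + (-(mm:ℝ) + c * |u|)) := Real.exp_le_exp.2 h2
          _ = (t * n) ^ mm * Real.exp (-(mm:ℝ)) * Real.exp (c * |u|) := by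
              rw [Real.exp_add, Real.exp_add, ← Real.log_pow, Real.exp_log (pow_pos htn mm)]
              ring
      refine key.trans ?_
      have hcu : Real.exp (c * |u|) ≤ Real.exp (c * u) + Real.exp (-(c * u)) := by
        rcases abs_cases u with ⟨h, _⟩ | ⟨h, _⟩
        · rw [h]; nlinarith [Real.exp_pos (-(c * u))]
        · rw [h, mul_neg]
          linarith [Real.exp_pos (c * u)]
      have : (0:ℝ) ≤ (t * n) ^ mm * Real.exp (-(mm:ℝ)) := by positivity
      nlinarith
  calc ∑ s : Finset (Fin n), ((n:ℝ) - 2 * s.card) ^ mm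
      ≤ ∑ s : Finset (Fin n), (t * n) ^ mm * Real.exp (-(mm:ℝ)) *
          (Real.exp (c * ((n:ℝ) - 2 * s.card)) + Real.exp (-(c * ((n:ℝ) - 2 * s.card)))) :=
        Finset.sum_le_sum (fun s _ => hterm _)
    _ = (t * n) ^ mm * Real.exp (-(mm:ℝ)) *
          ((∑ s : Finset (Fin n), Real.exp (c * ((n:ℝ) - 2 * s.card))) +
           (∑ s : Finset (Fin n), Real.exp ((-c) * ((n:ℝ) - 2 * s.card)))) := by
        rw [← Finset.mul_sum, Finset.sum_add_distrib]
        congr 2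
        refine Finset.sum_congr rfl (fun s _ => by rw [neg_mul, neg_mul_eq_neg_mul])
    _ = (t * n) ^ mm * Real.exp (-(mm:ℝ)) *
          ((Real.exp (-c) + Real.exp c) ^ n + (Real.exp c + Real.exp (-c)) ^ n) := by
        rw [exp_sum_finset, exp_sum_finset, neg_neg]
    _ = (t * n) ^ mm * Real.exp (-(mm:ℝ)) * (2 * (2 * Real.cosh ((mm:ℝ) / (t * n))) ^ n) := by
        rw [Real.cosh_eq, ← hc]
        ring_nf

lemma sum_lower (n mm k : ℕ) (hm : Even mm) (hk : k ≤ n) :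
    (n.choose k : ℝ) * ((n:ℝ) - 2 * k) ^ mm ≤
      ∑ s : Finset (Fin n), ((n:ℝ) - 2 * s.card) ^ mm := by
  have hsub : Finset.powersetCard k (Finset.univ : Finset (Fin n)) ⊆ Finset.univ :=
    Finset.subset_univ _
  have h1 : ∑ s ∈ Finset.powersetCard k (Finset.univ : Finset (Fin n)),
      ((n:ℝ) - 2 * s.card) ^ mm = (n.choose k : ℝ) * ((n:ℝ) - 2 * k) ^ mm := by
    rw [Finset.sum_congr rfl (fun s hs => by
      rw [(Finset.mem_powersetCard_univ.mp hs : s.card = k)]), Finset.sum_const,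
      Finset.card_powersetCard, Finset.card_univ, Fintype.card_fin, nsmul_eq_mul]
  rw [← h1]
  refine Finset.sum_le_sum_of_subset_of_nonneg hsub (fun s _ _ => hm.pow_nonneg _)

lemma piProb_upper (n mm : ℕ) (hm : Even mm) (hm1 : 1 ≤ mm) (t : ℝ) (ht : 0 < t) (hn : 1 ≤ n) :
    piProb n mm ≤ 2 * t ^ mm * Real.exp (-(mm:ℝ)) * (Real.cosh ((mm:ℝ) / (t * n))) ^ n := by
  have hn' : (0:ℝ) < n := by exact_mod_cast hn
  have hd : (0:ℝ) < 2 ^ n * (n:ℝ) ^ mm := by positivity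
  rw [piProb_eq n mm hm]
  refine ((div_le_div_iff_of_pos_right hd).mpr (sum_upper n mm hm hm1 t ht hn)).trans_eq ?_
  rw [mul_pow t (n:ℝ) mm, mul_pow 2 (Real.cosh ((mm:ℝ) / (t * n))) n]
  field_simp

lemma piProb_lower (n mm k : ℕ) (hm : Even mm) (hk : k ≤ n) (hn : 1 ≤ n) :
    (n.choose k : ℝ) * (((n:ℝ) - 2 * k) / n) ^ mm / 2 ^ n ≤ piProb n mm := by
  have hn' : (0:ℝ) < n := by exact_mod_cast hn
  have hd : (0:ℝ) < 2 ^ n * (n:ℝ) ^ mm := by positivity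
  rw [piProb_eq n mm hm]
  refine le_trans (le_of_eq ?_) ((div_le_div_iff_of_pos_right hd).mpr (sum_lower n mm k hm hk))
  rw [div_pow, ← mul_div_assoc, div_div, mul_comm ((n:ℝ) ^ mm) ((2:ℝ) ^ n)]

noncomputable def K0 : ℝ :=
  max |Real.log (Real.sqrt Real.pi)| |Real.log (Stirling.stirlingSeq 1)|

lemma stirling_lb (n : ℕ) (hn : 1 ≤ n) : Real.sqrt Real.pi ≤ Stirling.stirlingSeq n := by
  obtain ⟨k, rfl⟩ := Nat.exists_eq_add_of_le hn
  have h : Tendsto (Stirling.stirlingSeq ∘ Nat.succ) atTop (𝓝 (Real.sqrt Real.pi)) := by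
    rw [← Filter.tendsto_map'_iff]
    exact Stirling.tendsto_stirlingSeq_sqrt_pi.comp (Filter.tendsto_add_atTop_nat 1)
  have := Stirling.stirlingSeq'_antitone.le_of_tendsto
    (Stirling.tendsto_stirlingSeq_sqrt_pi.comp (Filter.tendsto_add_atTop_nat 1)) k
  simpa [Nat.succ_eq_add_one, Nat.add_comm] using this

lemma stirling_ub (n : ℕ) (hn : 1 ≤ n) : Stirling.stirlingSeq n ≤ Stirling.stirlingSeq 1 := by
  obtain ⟨k, rfl⟩ := Nat.exists_eq_add_of_le hn
  have := Stirling.stirlingSeq'_antitone (Nat.zero_le k)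
  simpa [Nat.succ_eq_add_one, Nat.add_comm] using this

lemma stirling_pos (n : ℕ) (hn : 1 ≤ n) : 0 < Stirling.stirlingSeq n :=
  lt_of_lt_of_le (Real.sqrt_pos.mpr Real.pi_pos) (stirling_lb n hn)

lemma abs_log_stirling (n : ℕ) (hn : 1 ≤ n) : |Real.log (Stirling.stirlingSeq n)| ≤ K0 := by
  rw [abs_le]
  constructor
  · have h1 : Real.log (Real.sqrt Real.pi) ≤ Real.log (Stirling.stirlingSeq n) :=
      Real.log_le_log (Real.sqrt_pos.mpr Real.pi_pos) (stirling_lb n hn)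
    have h2 : |Real.log (Real.sqrt Real.pi)| ≤ K0 := le_max_left _ _
    have h3 := neg_abs_le (Real.log (Real.sqrt Real.pi))
    linarith
  · have h1 : Real.log (Stirling.stirlingSeq n) ≤ Real.log (Stirling.stirlingSeq 1) :=
      Real.log_le_log (stirling_pos n hn) (stirling_ub n hn)
    exact h1.trans ((le_abs_self _).trans (le_max_right _ _))

lemma log_factorial (n : ℕ) (hn : 1 ≤ n) :
    Real.log (Nat.factorial n : ℝ) = Real.log (Stirling.stirlingSeq n) +
      Real.log (Real.sqrt (2 * n)) + n * (Real.log n - 1) := by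
  have hn' : (0:ℝ) < n := by exact_mod_cast hn
  have hs : (0:ℝ) < Real.sqrt (2 * n) := Real.sqrt_pos.mpr (by positivity)
  have hp : (0:ℝ) < ((n:ℝ) / Real.exp 1) ^ n := by positivity
  have hfact : (Nat.factorial n : ℝ) = Stirling.stirlingSeq n * (Real.sqrt (2 * n) * ((n:ℝ) / Real.exp 1) ^ n) := by
    rw [Stirling.stirlingSeq]
    field_simp
  rw [hfact, Real.log_mul (ne_of_gt (stirling_pos n hn)) (by positivity),
    Real.log_mul (ne_of_gt hs) (ne_of_gt hp), Real.log_pow,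
    Real.log_div (ne_of_gt hn') (Real.exp_ne_zero 1), Real.log_exp]
  ring

lemma log_choose_error (n k : ℕ) (hk1 : 1 ≤ k) (hkn : k < n) :
    |Real.log (n.choose k : ℝ) -
      (-((k:ℝ) * Real.log ((k:ℝ) / n)) - ((n:ℝ) - k) * Real.log (((n:ℝ) - k) / n))| ≤
      3 * K0 + 3 * Real.log (Real.sqrt (2 * n)) := by
  have hn1 : 1 ≤ n := hk1.trans hkn.le
  have hnk1 : 1 ≤ n - k := by omega
  have hk' : (0:ℝ) < k := by exact_mod_cast hk1
  have hn' : (0:ℝ) < n := by exact_mod_cast hn1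
  have hcast : ((n - k : ℕ) : ℝ) = (n:ℝ) - k := by
    rw [Nat.cast_sub hkn.le]
  have hb' : (0:ℝ) < (n:ℝ) - k := by
    rw [← hcast]; exact_mod_cast hnk1
  -- log choose = log n! - log k! - log (n-k)!
  have hchoose : Real.log (n.choose k : ℝ) =
      Real.log (Nat.factorial n : ℝ) - Real.log (Nat.factorial k : ℝ) - Real.log (Nat.factorial (n - k) : ℝ) := by
    rw [Nat.cast_choose ℝ hkn.le, Real.log_div (by positivity) (by positivity),
      Real.log_mul (by positivity) (by positivity)]
    ring
  rw [hchoose, log_factorial n hn1, log_factorial k hk1, log_factorial (n - k) hnk1]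
  have hmain : (n:ℝ) * (Real.log n - 1) - (k:ℝ) * (Real.log k - 1) -
      ((n:ℝ) - k) * (Real.log ((n:ℝ) - k) - 1) =
      -((k:ℝ) * Real.log ((k:ℝ) / n)) - ((n:ℝ) - k) * Real.log (((n:ℝ) - k) / n) := by
    rw [Real.log_div (ne_of_gt hk') (ne_of_gt hn'),
      Real.log_div (ne_of_gt hb') (ne_of_gt hn')]
    ring
  have hlogsqrt : ∀ j : ℕ, 1 ≤ j → j ≤ n →
      0 ≤ Real.log (Real.sqrt (2 * j)) ∧
        Real.log (Real.sqrt (2 * j)) ≤ Real.log (Real.sqrt (2 * n)) := by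
    intro j hj1 hjn
    have hj' : (1:ℝ) ≤ j := by exact_mod_cast hj1
    have hjn' : (j:ℝ) ≤ n := by exact_mod_cast hjn
    constructor
    · apply Real.log_nonneg
      rw [show (1:ℝ) = Real.sqrt 1 by simp]
      exact Real.sqrt_le_sqrt (by linarith)
    · apply Real.log_le_log (Real.sqrt_pos.mpr (by linarith))
      exact Real.sqrt_le_sqrt (by linarith)
  have e1 := abs_log_stirling n hn1
  have e2 := abs_log_stirling k hk1
  have e3 := abs_log_stirling (n - k) hnk1
  obtain ⟨s1a, s1b⟩ := hlogsqrt n hn1 le_rfl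
  obtain ⟨s2a, s2b⟩ := hlogsqrt k hk1 hkn.le
  obtain ⟨s3a, s3b⟩ := hlogsqrt (n - k) hnk1 (by omega)
  rw [hcast] at s3a s3b
  rw [hcast]
  rw [abs_le] at e1 e2 e3 ⊢
  constructor <;> linarith [hmain]

lemma tendsto_log_nat_div : Tendsto (fun n : ℕ => Real.log n / n) atTop (𝓝 0) :=
  (Real.isLittleO_log_id_atTop.tendsto_div_nhds_zero).comp tendsto_natCast_atTop_atTop

lemma tendsto_bound_div :
    Tendsto (fun n : ℕ => (3 * K0 + 3 * Real.log (Real.sqrt (2 * n))) / n) atTop (𝓝 0) := by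
  have h1 : Tendsto (fun n : ℕ => (n:ℝ)⁻¹) atTop (𝓝 0) := tendsto_inv_atTop_nhds_zero_nat
  have heq : ∀ᶠ n : ℕ in atTop,
      (3 * K0 + 3 * Real.log (Real.sqrt (2 * n))) / n =
      (3 * K0 + (3/2) * Real.log 2) * (n:ℝ)⁻¹ + (3/2) * (Real.log n / n) := by
    filter_upwards [eventually_ge_atTop 1] with n hn
    have hn' : (0:ℝ) < n := by exact_mod_cast hn
    rw [Real.log_sqrt (by positivity), Real.log_mul (by norm_num) (ne_of_gt hn')]
    field_simp
    ring
  refine Tendsto.congr' (heq.mono (fun n h => h.symm)) ?_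
  have := ((h1.const_mul (3 * K0 + (3/2) * Real.log 2)).add
    ((tendsto_log_nat_div.const_mul (3/2))))
  simpa using this
lemma tendsto_log_choose (x : ℝ) (hx0 : 0 < x) (hx1 : x < 1) (kk : ℕ → ℕ)
    (hk : Tendsto (fun n => (kk n : ℝ) / n) atTop (𝓝 x))
    (hev : ∀ᶠ n in atTop, 1 ≤ kk n ∧ kk n < n) :
    Tendsto (fun n : ℕ => Real.log ((n.choose (kk n) : ℝ)) / n) atTop
      (𝓝 (-(x * Real.log x) - (1 - x) * Real.log (1 - x))) := by
  set g : ℕ → ℝ := fun n =>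
    -(((kk n : ℝ) / n) * Real.log ((kk n : ℝ) / n)) -
      (1 - (kk n : ℝ) / n) * Real.log (1 - (kk n : ℝ) / n) with hg_def
  have hlog1 : Tendsto (fun n => Real.log ((kk n : ℝ) / n)) atTop (𝓝 (Real.log x)) :=
    ((Real.continuousAt_log (ne_of_gt hx0)).tendsto).comp hk
  have h1r : Tendsto (fun n => 1 - (kk n : ℝ) / n) atTop (𝓝 (1 - x)) :=
    tendsto_const_nhds.sub hk
  have hlog2 : Tendsto (fun n => Real.log (1 - (kk n : ℝ) / n)) atTop (𝓝 (Real.log (1 - x))) :=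
    ((Real.continuousAt_log (by linarith : (1:ℝ) - x ≠ 0)).tendsto).comp h1r
  have hg : Tendsto g atTop (𝓝 (-(x * Real.log x) - (1 - x) * Real.log (1 - x))) :=
    ((hk.mul hlog1).neg).sub (h1r.mul hlog2)
  have hdiff : Tendsto (fun n : ℕ => Real.log ((n.choose (kk n) : ℝ)) / n - g n) atTop (𝓝 0) := by
    apply squeeze_zero_norm' (a := fun n : ℕ => (3 * K0 + 3 * Real.log (Real.sqrt (2 * n))) / n)
    · filter_upwards [hev, eventually_ge_atTop 1] with n hn hn1
      obtain ⟨hk1, hkn⟩ := hn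
      have hn' : (0:ℝ) < n := by exact_mod_cast hn1
      have herr := log_choose_error n (kk n) hk1 hkn
      have hng : (n:ℝ) * g n =
          -((kk n : ℝ) * Real.log ((kk n : ℝ) / n)) -
            ((n:ℝ) - kk n) * Real.log (((n:ℝ) - kk n) / n) := by
        have h2 : ((n:ℝ) - kk n) / n = 1 - (kk n : ℝ) / n := by field_simp
        rw [hg_def]
        simp only []
        rw [h2]
        field_simp
      have : Real.log ((n.choose (kk n) : ℝ)) / n - g n =
          (Real.log ((n.choose (kk n) : ℝ)) -
            (-((kk n : ℝ) * Real.log ((kk n : ℝ) / n)) -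
              ((n:ℝ) - kk n) * Real.log (((n:ℝ) - kk n) / n))) / n := by
        rw [← hng]
        field_simp
      rw [Real.norm_eq_abs, this, abs_div, abs_of_pos hn']
      exact (div_le_div_iff_of_pos_right hn').mpr herr
    · exact tendsto_bound_div
  have := hdiff.add hg
  simp only [sub_add_cancel, zero_add] at this
  exact this

theorem stmt8 (lam : ℝ) (hlam : 0 < lam) (α : ℝ) (hα : α = lam * Real.tanh lam)
    (m : ℕ → ℕ) (hmeven : ∀ n, Even (m n))
    (hma : Filter.Tendsto (fun n => (m n : ℝ) / n) atTop (𝓝 α)) :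
    Filter.Tendsto (fun n : ℕ => (n : ℝ)⁻¹ * Real.log (piProb n (m n))) atTop
      (𝓝 (Real.log (Real.cosh lam) -
            (lam * Real.tanh lam) * (1 - Real.log (Real.tanh lam)))) := by
  set t : ℝ := Real.tanh lam with ht_def
  have hcosh : 0 < Real.cosh lam := Real.cosh_pos lam
  have hsinh : 0 < Real.sinh lam := Real.sinh_pos_iff.mpr hlam
  have ht0 : 0 < t := by rw [ht_def, Real.tanh_eq_sinh_div_cosh]; positivity
  have ht1 : t < 1 := by
    rw [ht_def, Real.tanh_eq_sinh_div_cosh, div_lt_one hcosh]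
    nlinarith [Real.cosh_sub_sinh lam, Real.exp_pos (-lam)]
  have h1t : (1:ℝ) - t = Real.exp (-lam) / Real.cosh lam := by
    rw [ht_def, Real.tanh_eq_sinh_div_cosh]
    field_simp
    exact Real.cosh_sub_sinh lam
  have h1t' : (1:ℝ) + t = Real.exp lam / Real.cosh lam := by
    rw [ht_def, Real.tanh_eq_sinh_div_cosh]
    field_simp
    exact Real.cosh_add_sinh lam
  have hα0 : 0 < α := by rw [hα]; positivity
  set x : ℝ := (1 - t) / 2 with hx_def
  have hx0 : 0 < x := by rw [hx_def]; linarith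
  have hx12 : x < 1/2 := by rw [hx_def]; linarith
  have hx1 : x < 1 := by linarith
  set kk : ℕ → ℕ := fun n => ⌊x * (n:ℝ)⌋₊ with hkk_def
  have hkx : Tendsto (fun n : ℕ => (kk n : ℝ) / n) atTop (𝓝 x) :=
    (tendsto_nat_floor_mul_div_atTop hx0.le).comp tendsto_natCast_atTop_atTop
  have hkk_atTop : Tendsto kk atTop atTop := tendsto_nat_floor_mul_atTop x hx0
  -- basic facts for n ≥ 1
  have hbasic : ∀ n : ℕ, 1 ≤ n → 2 * kk n < n := by
    intro n hn
    have hn' : (0:ℝ) < n := by exact_mod_cast hn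
    have hfl : (kk n : ℝ) ≤ x * n := Nat.floor_le (by positivity)
    have : ((2 * kk n : ℕ) : ℝ) < (n : ℝ) := by
      push_cast
      have : 2 * x * n < n := by nlinarith
      nlinarith
    exact_mod_cast this
  have hev_k1 : ∀ᶠ n in atTop, 1 ≤ kk n := hkk_atTop.eventually_ge_atTop 1
  have hev_m1 : ∀ᶠ n in atTop, 1 ≤ m n := by
    have hpos : ∀ᶠ n in atTop, 0 < (m n : ℝ) / n := hma.eventually (eventually_gt_nhds hα0)
    filter_upwards [hpos] with n h
    rcases Nat.eq_zero_or_pos (m n) with h0 | h1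
    · rw [h0] at h; simp at h
    · exact h1
  -- limit of tn
  have htn : Tendsto (fun n : ℕ => ((n:ℝ) - 2 * kk n) / n) atTop (𝓝 t) := by
    have heq : ∀ᶠ n : ℕ in atTop, 1 - 2 * ((kk n : ℝ) / n) = ((n:ℝ) - 2 * kk n) / n := by
      filter_upwards [eventually_ge_atTop 1] with n hn
      have hn' : (0:ℝ) < n := by exact_mod_cast hn
      field_simp
    have hlim : Tendsto (fun n : ℕ => 1 - 2 * ((kk n : ℝ) / n)) atTop (𝓝 (1 - 2 * x)) :=
      tendsto_const_nhds.sub (hkx.const_mul 2)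
    have hval : 1 - 2 * x = t := by rw [hx_def]; ring
    rw [hval] at hlim
    exact Tendsto.congr' heq hlim
  have hlogtn : Tendsto (fun n : ℕ => Real.log (((n:ℝ) - 2 * kk n) / n)) atTop (𝓝 (Real.log t)) :=
    ((Real.continuousAt_log ht0.ne').tendsto).comp htn
  have hev_kn : ∀ᶠ n in atTop, 1 ≤ kk n ∧ kk n < n := by
    filter_upwards [hev_k1, eventually_ge_atTop 1] with n h1 h2
    exact ⟨h1, by have := hbasic n h2; omega⟩
  have hchoose_lim := tendsto_log_choose x hx0 hx1 kk hkx hev_kn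
  -- lower bound sequence
  set B : ℕ → ℝ := fun n => -Real.log 2 + Real.log ((n.choose (kk n) : ℝ)) / n +
      ((m n : ℝ) / n) * Real.log (((n:ℝ) - 2 * kk n) / n) with hB_def
  have hB : Tendsto B atTop
      (𝓝 (-Real.log 2 + (-(x * Real.log x) - (1 - x) * Real.log (1 - x)) + α * Real.log t)) :=
    (tendsto_const_nhds.add hchoose_lim).add (hma.mul hlogtn)
  -- upper bound sequence
  have hlam_lim : Tendsto (fun n : ℕ => (m n : ℝ) / (t * n)) atTop (𝓝 lam) := by
    have heq : ∀ n : ℕ, ((m n : ℝ) / n) / t = (m n : ℝ) / (t * n) := fun n => by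
      rw [div_div, mul_comm]
    have : Tendsto (fun n : ℕ => ((m n : ℝ) / n) / t) atTop (𝓝 (α / t)) := hma.div_const t
    have hval : α / t = lam := by
      rw [hα, mul_div_assoc, div_self ht0.ne', mul_one]
    rw [hval] at this
    exact Tendsto.congr heq this
  have hcosh_lim : Tendsto (fun n : ℕ => Real.log (Real.cosh ((m n : ℝ) / (t * n)))) atTop
      (𝓝 (Real.log (Real.cosh lam))) :=
    ((Real.continuousAt_log hcosh.ne').tendsto).comp
      ((Real.continuous_cosh.tendsto lam).comp hlam_lim)
  have hinvlog2 : Tendsto (fun n : ℕ => (n:ℝ)⁻¹ * Real.log 2) atTop (𝓝 0) := by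
    have := tendsto_inv_atTop_nhds_zero_nat.mul_const (Real.log 2)
    simpa using this
  set U : ℕ → ℝ := fun n => (n:ℝ)⁻¹ * Real.log 2 + ((m n : ℝ) / n) * (Real.log t - 1) +
      Real.log (Real.cosh ((m n : ℝ) / (t * n))) with hU_def
  have hU : Tendsto U atTop (𝓝 (0 + α * (Real.log t - 1) + Real.log (Real.cosh lam))) :=
    (hinvlog2.add (hma.mul_const _)).add hcosh_lim
  -- value identities
  have hlx : Real.log x = -lam - Real.log (Real.cosh lam) - Real.log 2 := by
    rw [hx_def, Real.log_div (by linarith) (by norm_num), h1t,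
      Real.log_div (Real.exp_ne_zero _) hcosh.ne', Real.log_exp]
  have hl1x : Real.log (1 - x) = lam - Real.log (Real.cosh lam) - Real.log 2 := by
    have h1mx : 1 - x = (1 + t) / 2 := by rw [hx_def]; ring
    rw [h1mx, Real.log_div (by linarith) (by norm_num), h1t',
      Real.log_div (Real.exp_ne_zero _) hcosh.ne', Real.log_exp]
  have hBval : -Real.log 2 + (-(x * Real.log x) - (1 - x) * Real.log (1 - x)) + α * Real.log t =
      Real.log (Real.cosh lam) - lam * t * (1 - Real.log t) := by
    rw [hα, hlx, hl1x, hx_def]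
    ring
  have hUval : 0 + α * (Real.log t - 1) + Real.log (Real.cosh lam) =
      Real.log (Real.cosh lam) - lam * t * (1 - Real.log t) := by
    rw [hα]; ring
  rw [hBval] at hB
  rw [hUval] at hU
  -- inequalities
  have hle_low : ∀ᶠ n : ℕ in atTop, B n ≤ (n:ℝ)⁻¹ * Real.log (piProb n (m n)) := by
    filter_upwards [eventually_ge_atTop 1] with n hn1
    have hn' : (0:ℝ) < n := by exact_mod_cast hn1
    have h2k := hbasic n hn1
    have hkle : kk n ≤ n := by omega
    have htnpos : (0:ℝ) < ((n:ℝ) - 2 * kk n) / n := by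
      apply div_pos _ hn'
      have : ((2 * kk n : ℕ) : ℝ) < n := by exact_mod_cast h2k
      push_cast at this
      linarith
    have hcpos : (0:ℝ) < (n.choose (kk n) : ℝ) := by
      exact_mod_cast Nat.choose_pos hkle
    have hlow := piProb_lower n (m n) (kk n) (hmeven n) hkle hn1
    have hlowpos : (0:ℝ) < (n.choose (kk n) : ℝ) * (((n:ℝ) - 2 * kk n) / n) ^ (m n) / 2 ^ n := by
      positivity
    have hlogle := Real.log_le_log hlowpos hlow
    have hlogeq : Real.log ((n.choose (kk n) : ℝ) * (((n:ℝ) - 2 * kk n) / n) ^ (m n) / 2 ^ n) =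
        Real.log ((n.choose (kk n) : ℝ)) + (m n : ℝ) * Real.log (((n:ℝ) - 2 * kk n) / n) -
          (n : ℝ) * Real.log 2 := by
      rw [Real.log_div (by positivity) (by positivity),
        Real.log_mul hcpos.ne' (by positivity), Real.log_pow, Real.log_pow]
    rw [hlogeq] at hlogle
    have hBeq : B n = (n:ℝ)⁻¹ * (Real.log ((n.choose (kk n) : ℝ)) +
        (m n : ℝ) * Real.log (((n:ℝ) - 2 * kk n) / n) - (n : ℝ) * Real.log 2) := by
      rw [hB_def]
      field_simp
      ring
    rw [hBeq]
    exact mul_le_mul_of_nonneg_left hlogle (by positivity)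
  have hle_up : ∀ᶠ n : ℕ in atTop, (n:ℝ)⁻¹ * Real.log (piProb n (m n)) ≤ U n := by
    filter_upwards [eventually_ge_atTop 1, hev_m1] with n hn1 hm1
    have hn' : (0:ℝ) < n := by exact_mod_cast hn1
    have h2k := hbasic n hn1
    have hkle : kk n ≤ n := by omega
    have htnpos : (0:ℝ) < ((n:ℝ) - 2 * kk n) / n := by
      apply div_pos _ hn'
      have : ((2 * kk n : ℕ) : ℝ) < n := by exact_mod_cast h2k
      push_cast at this
      linarith
    have hcpos : (0:ℝ) < (n.choose (kk n) : ℝ) := by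
      exact_mod_cast Nat.choose_pos hkle
    have hlow := piProb_lower n (m n) (kk n) (hmeven n) hkle hn1
    have hlowpos : (0:ℝ) < (n.choose (kk n) : ℝ) * (((n:ℝ) - 2 * kk n) / n) ^ (m n) / 2 ^ n := by
      positivity
    have hpipos : 0 < piProb n (m n) := lt_of_lt_of_le hlowpos hlow
    have hup := piProb_upper n (m n) (hmeven n) hm1 t ht0 hn1
    have hlogle := Real.log_le_log hpipos hup
    have hlogeq : Real.log (2 * t ^ (m n) * Real.exp (-(m n : ℝ)) *
        (Real.cosh ((m n : ℝ) / (t * n))) ^ n) =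
        Real.log 2 + (m n : ℝ) * Real.log t - (m n : ℝ) +
          (n : ℝ) * Real.log (Real.cosh ((m n : ℝ) / (t * n))) := by
      rw [Real.log_mul (by positivity) (by positivity),
        Real.log_mul (by positivity) (Real.exp_ne_zero _),
        Real.log_mul (by norm_num) (by positivity),
        Real.log_pow, Real.log_pow, Real.log_exp]
      push_cast
      ring
    rw [hlogeq] at hlogle
    have hUeq : U n = (n:ℝ)⁻¹ * (Real.log 2 + (m n : ℝ) * Real.log t - (m n : ℝ) +
        (n : ℝ) * Real.log (Real.cosh ((m n : ℝ) / (t * n)))) := by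
      rw [hU_def]
      field_simp
      ring
    rw [hUeq]
    exact mul_le_mul_of_nonneg_left hlogle (by positivity)
  exact tendsto_of_tendsto_of_tendsto_of_le_of_le' hB hU hle_low hle_up
end

section
/- Let F be a finite field with q elements, and let X_1, X_2, ... be i.i.d. random vectors uniformly distributed on F^n \ {0}. Let T_n = min{m ∈ ℕ : X_m ∈ span{X_1, ..., X_{m−1}}}. Then for any integer r ≥ 0, lim_{n→∞} P[T_n > n + 1 − r] = ∏_{j=r}^∞ (1 − q^{−j}) =: p_r ∈ [0,1], where p_0 = 0. Moreover, for all n ∈ ℕ and 1 ≤ r ≤ n, P[T_n > n + 1 − r] ≥ exp(−q^{1−r}) if q ≥ 3, and P[T_n > n + 1 − r] ≥ exp(−(4/3)·2^{1−r}) if q = 2. -/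
open Filter Topology

/-- `T_n` for a sequence of `n+1` row vectors in `F^n`: the first `m` such that
the first `m` rows are linearly dependent over `F`, i.e. the rank of the
top-`m` submatrix is less than `m`. (Rows beyond the `(n+1)`-st are padded by
zero, which does not affect the value since the first `n+1` rows are always
dependent.) -/
noncomputable def TvalF (F : Type*) [Field F] (n : ℕ)
    (g : Fin (n + 1) → Fin n → F) : ℕ :=
  sInf {m : ℕ | (Matrix.of (fun (i : Fin m) (j : Fin n) =>
    if h : (i : ℕ) < n + 1 then g ⟨(i : ℕ), h⟩ j else 0)).rank < m}

section Helpers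

variable {F : Type*} [Field F] {n : ℕ}

lemma rank_lt_iff {m : ℕ} (hm : m ≤ n + 1) (g : Fin (n + 1) → Fin n → F) :
    (Matrix.of (fun (i : Fin m) (j : Fin n) =>
      if h : (i : ℕ) < n + 1 then g ⟨(i : ℕ), h⟩ j else 0)).rank < m ↔
    ¬ LinearIndependent F (fun i : Fin m => g (Fin.castLE hm i)) := by
  have hM : (Matrix.of (fun (i : Fin m) (j : Fin n) =>
      if h : (i : ℕ) < n + 1 then g ⟨(i : ℕ), h⟩ j else 0)) =
      Matrix.of (fun (i : Fin m) (j : Fin n) => g (Fin.castLE hm i) j) := by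
    ext i j
    rw [Matrix.of_apply, Matrix.of_apply, dif_pos (lt_of_lt_of_le i.2 hm)]
    rfl
  rw [hM]
  set M : Matrix (Fin m) (Fin n) F :=
    Matrix.of (fun (i : Fin m) (j : Fin n) => g (Fin.castLE hm i) j) with hMdef
  have h1 : LinearIndependent F (fun i : Fin m => g (Fin.castLE hm i)) ↔ M.rank = m := by
    constructor
    · intro h
      have h' : LinearIndependent F M := h
      rw [h'.rank_matrix, Fintype.card_fin]
    · intro h
      have h' : LinearIndependent F M := by
        refine linearIndependent_iff_card_eq_finrank_span.2 ?_
        rw [Fintype.card_fin, Set.finrank]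
        exact h.symm.trans (Matrix.rank_eq_finrank_span_row M)
      exact h'
  have h2 : M.rank ≤ m := M.rank_le_height
  rw [h1]
  omega
end Helpers

section H2
variable {F : Type*} [Field F] {n : ℕ}


lemma tvalF_le (g : Fin (n + 1) → Fin n → F) : TvalF F n g ≤ n + 1 := by
  apply Nat.sInf_le
  have : (Matrix.of (fun (i : Fin (n+1)) (j : Fin n) =>
      if h : (i : ℕ) < n + 1 then g ⟨(i : ℕ), h⟩ j else 0)).rank ≤ n :=
    le_trans (Matrix.rank_le_card_width _) (by simp)
  simpa using lt_of_le_of_lt this (Nat.lt_succ_self n)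

lemma lt_tvalF_iff {s : ℕ} (hs : s ≤ n) (g : Fin (n + 1) → Fin n → F) :
    s < TvalF F n g ↔
      LinearIndependent F (fun i : Fin s => g (Fin.castLE (hs.trans (Nat.le_succ n)) i)) := by
  have hs' : s ≤ n + 1 := hs.trans (Nat.le_succ n)
  constructor
  · intro h
    by_contra hLI
    have hle : TvalF F n g ≤ s := Nat.sInf_le ((rank_lt_iff hs' g).2 hLI)
    omega
  · intro hLI
    by_contra h
    push_neg at h
    have hne : {m : ℕ | (Matrix.of (fun (i : Fin m) (j : Fin n) =>
        if h : (i : ℕ) < n + 1 then g ⟨(i : ℕ), h⟩ j else 0)).rank < m}.Nonempty := by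
      refine ⟨n + 1, ?_⟩
      have : (Matrix.of (fun (i : Fin (n+1)) (j : Fin n) =>
          if h : (i : ℕ) < n + 1 then g ⟨(i : ℕ), h⟩ j else 0)).rank ≤ n :=
        le_trans (Matrix.rank_le_card_width _) (by simp)
      simpa using lt_of_le_of_lt this (Nat.lt_succ_self n)
    have hmem := Nat.sInf_mem hne
    set m := TvalF F n g with hmdef
    have hm : m ≤ n + 1 := tvalF_le g
    have := (rank_lt_iff hm g).1 hmem
    apply this
    have hms : m ≤ s := h
    have : (fun i : Fin m => g (Fin.castLE hm i)) =
        (fun i : Fin s => g (Fin.castLE hs' i)) ∘ (Fin.castLE hms) := by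
      funext i
      exact congrArg g (Fin.ext rfl)
    rw [this]
    exact hLI.comp _ (Fin.castLE_injective hms)
end H2

open Classical in
/-- `P[T_n > s]` when the rows `X_1, …, X_{n+1}` are i.i.d. uniform on
`F^n \ {0}` (there are `(q^n - 1)^(n+1)` equally likely sequences of nonzero
rows). -/
noncomputable def probTF (F : Type*) [Field F] [Fintype F] (n s : ℕ) : ℝ :=
  ((Finset.univ.filter (fun g : Fin (n + 1) → Fin n → F =>
      (∀ i, g i ≠ 0) ∧ s < TvalF F n g)).card : ℝ) /
    ((Fintype.card F ^ n - 1 : ℕ) : ℝ) ^ (n + 1)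

section H3
variable {F : Type*} [Field F] [Fintype F] {n : ℕ}

open Classical in
lemma count_eq {s : ℕ} (hs : s ≤ n) :
    (Finset.univ.filter (fun g : Fin (n + 1) → Fin n → F =>
      (∀ i, g i ≠ 0) ∧ s < TvalF F n g)).card =
    (∏ i : Fin s, (Fintype.card F ^ n - Fintype.card F ^ (i : ℕ))) *
      (Fintype.card F ^ n - 1) ^ (n + 1 - s) := by
  classical
  have hs' : s ≤ n + 1 := hs.trans (Nat.le_succ n)
  set t := n + 1 - s with ht
  -- step 1 : rewrite the filter
  have hiff : ∀ g : Fin (n + 1) → Fin n → F,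
      ((∀ i, g i ≠ 0) ∧ s < TvalF F n g) ↔
      (LinearIndependent F (fun i : Fin s => g (Fin.castLE hs' i)) ∧
        ∀ i : Fin (n + 1), s ≤ (i : ℕ) → g i ≠ 0) := by
    intro g
    constructor
    · rintro ⟨h0, hT⟩
      exact ⟨(lt_tvalF_iff hs g).1 hT, fun i _ => h0 i⟩
    · rintro ⟨hLI, h0⟩
      refine ⟨fun i => ?_, (lt_tvalF_iff hs g).2 hLI⟩
      by_cases hi : (i : ℕ) < s
      · have h2 := hLI.ne_zero ⟨(i : ℕ), hi⟩
        have h3 : Fin.castLE hs' (⟨(i : ℕ), hi⟩ : Fin s) = i := Fin.ext rfl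
        rwa [h3] at h2
      · exact h0 i (le_of_not_gt hi)
  rw [Finset.filter_congr (fun g _ => hiff g)]
  -- step 2 : bijection with a product
  set A : Finset (Fin s → Fin n → F) := Finset.univ.filter (fun u => LinearIndependent F u)
    with hA
  set B : Finset (Fin t → Fin n → F) := Finset.univ.filter (fun v => ∀ i, v i ≠ 0) with hB
  have hst : ∀ i : Fin t, s + (i : ℕ) < n + 1 := fun i => by omega
  have hts : ∀ i : Fin (n + 1), ¬ ((i : ℕ) < s) → (i : ℕ) - s < t := fun i hi => by omega
  have hcard : (Finset.univ.filter (fun g : Fin (n + 1) → Fin n → F =>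
      (LinearIndependent F (fun i : Fin s => g (Fin.castLE hs' i)) ∧
        ∀ i : Fin (n + 1), s ≤ (i : ℕ) → g i ≠ 0))).card = (A ×ˢ B).card := by
    apply Finset.card_bij'
      (i := fun g _ => (fun i : Fin s => g (Fin.castLE hs' i),
        fun i : Fin t => g ⟨s + (i : ℕ), hst i⟩))
      (j := fun p _ => fun i : Fin (n + 1) =>
        if h : (i : ℕ) < s then p.1 ⟨(i : ℕ), h⟩ else p.2 ⟨(i : ℕ) - s, hts i h⟩)
    · intro g hg
      rw [Finset.mem_filter] at hg
      rw [Finset.mem_product, Finset.mem_filter, Finset.mem_filter]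
      exact ⟨⟨Finset.mem_univ _, hg.2.1⟩,
        ⟨Finset.mem_univ _, fun i => hg.2.2 _ (Nat.le_add_right s i)⟩⟩
    · intro p hp
      rw [Finset.mem_product, Finset.mem_filter, Finset.mem_filter] at hp
      rw [Finset.mem_filter]
      refine ⟨Finset.mem_univ _, ?_, ?_⟩
      · have : (fun i : Fin s => (if h : ((Fin.castLE hs' i : Fin (n + 1)) : ℕ) < s
            then p.1 ⟨((Fin.castLE hs' i : Fin (n + 1)) : ℕ), h⟩
            else p.2 ⟨((Fin.castLE hs' i : Fin (n + 1)) : ℕ) - s, hts _ h⟩)) = p.1 := by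
          funext i
          rw [dif_pos (show ((Fin.castLE hs' i : Fin (n + 1)) : ℕ) < s from i.2)]
          exact congrArg p.1 (Fin.ext rfl)
        rw [this]
        exact hp.1.2
      · intro i hi
        have hni : ¬ ((i : ℕ) < s) := by omega
        simp only [dif_neg hni]
        exact hp.2.2 _
    · intro g hg
      funext i
      by_cases hi : (i : ℕ) < s
      · rw [dif_pos hi]
        exact congrArg g (Fin.ext rfl)
      · rw [dif_neg hi]
        exact congrArg g (Fin.ext (by simp; omega))
    · intro p hp
      refine Prod.ext ?_ ?_
      · funext i
        simp only [Fin.coe_castLE]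
        rw [dif_pos i.2]
      · funext i
        simp only
        rw [dif_neg (show ¬ (s + (i : ℕ) < s) by omega)]
        exact congrArg p.2 (Fin.ext (by simp))
  rw [hcard, Finset.card_product]
  -- step 3 : card of A
  have hAcard : A.card = ∏ i : Fin s, (Fintype.card F ^ n - Fintype.card F ^ (i : ℕ)) := by
    rw [hA]
    rw [show (Finset.univ.filter (fun u : Fin s → Fin n → F => LinearIndependent F u)).card
      = Fintype.card {u : Fin s → Fin n → F // LinearIndependent F u} from
        (Fintype.card_subtype _).symm]
    rw [← Nat.card_eq_fintype_card]
    have hfr : Module.finrank F (Fin n → F) = n := by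
      rw [Module.finrank_pi, Fintype.card_fin]
    rw [card_linearIndependent (K := F) (V := Fin n → F) (by rw [hfr]; exact hs), hfr]
  -- step 4 : card of B
  have hBcard : B.card = (Fintype.card F ^ n - 1) ^ t := by
    rw [hB]
    rw [show (Finset.univ.filter (fun v : Fin t → Fin n → F => ∀ i, v i ≠ 0)).card
      = Fintype.card {v : Fin t → Fin n → F // ∀ i, v i ≠ 0} from
        (Fintype.card_subtype _).symm]
    rw [Fintype.card_congr (Equiv.subtypePiEquivPi (p := fun (_ : Fin t) (x : Fin n → F) => x ≠ 0))]
    rw [Fintype.card_pi]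
    have : Fintype.card {x : Fin n → F // x ≠ 0} = Fintype.card F ^ n - 1 := by
      rw [Fintype.card_subtype_compl, Fintype.card_subtype_eq, Fintype.card_fun,
        Fintype.card_fin]
    simp [this]
  rw [hAcard, hBcard]
end H3

section H4
variable {F : Type*} [Field F] [Fintype F] {n : ℕ}

lemma two_le_qR : (2 : ℝ) ≤ (Fintype.card F : ℝ) := by
  have := Fintype.one_lt_card (α := F)
  exact_mod_cast this

lemma probTF_eq {s : ℕ} (hn : 1 ≤ n) (hs : s ≤ n) :
    probTF F n s = ∏ i ∈ Finset.range s,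
      (((Fintype.card F : ℝ) ^ n - (Fintype.card F : ℝ) ^ i) /
        ((Fintype.card F : ℝ) ^ n - 1)) := by
  classical
  set q := Fintype.card F with hqdef
  have hq1 : 1 ≤ q := le_of_lt Fintype.one_lt_card
  have hqR : (2 : ℝ) ≤ (q : ℝ) := two_le_qR
  have hBpos : (0 : ℝ) < (q : ℝ) ^ n - 1 := by
    have : (1 : ℝ) < (q : ℝ) ^ n := by
      apply one_lt_pow₀ (by linarith) (by omega)
    linarith
  rw [probTF, count_eq hs]
  have hcast1 : (((q ^ n - 1 : ℕ) : ℝ)) = (q : ℝ) ^ n - 1 := by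
    have : 1 ≤ q ^ n := Nat.one_le_pow _ _ (by omega)
    push_cast [Nat.cast_sub this]
    ring
  have hcast2 : ((((∏ i : Fin s, (q ^ n - q ^ (i : ℕ))) *
      (q ^ n - 1) ^ (n + 1 - s) : ℕ)) : ℝ) =
      (∏ i ∈ Finset.range s, ((q : ℝ) ^ n - (q : ℝ) ^ i)) *
        ((q : ℝ) ^ n - 1) ^ (n + 1 - s) := by
    push_cast
    rw [Fin.prod_univ_eq_prod_range (fun i => ((q ^ n - q ^ i : ℕ) : ℝ))]
    rw [hcast1]
    congr 1
    apply Finset.prod_congr rfl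
    intro i hi
    rw [Finset.mem_range] at hi
    have hle : q ^ i ≤ q ^ n := Nat.pow_le_pow_right (by omega) (by omega)
    push_cast [Nat.cast_sub hle]
    ring
  rw [hcast2, hcast1]
  have hpow : ((q : ℝ) ^ n - 1) ^ (n + 1) =
      ((q : ℝ) ^ n - 1) ^ s * ((q : ℝ) ^ n - 1) ^ (n + 1 - s) := by
    rw [← pow_add]
    congr 1
    omega
  rw [hpow, Finset.prod_div_distrib, Finset.prod_const, Finset.card_range]
  field_simp
end H4

section H5
variable {F : Type*} [Field F] [Fintype F] {n : ℕ}

lemma probTF_decomp {r : ℕ} (hr : 1 ≤ r) (hrn : r ≤ n) :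
    probTF F n (n + 1 - r) =
      ((Fintype.card F : ℝ) ^ n / ((Fintype.card F : ℝ) ^ n - 1)) ^ (n + 1 - r) *
        ∏ i ∈ Finset.range (n + 1 - r), (1 - ((Fintype.card F : ℝ))⁻¹ ^ (i + r)) := by
  have hn : 1 ≤ n := hr.trans hrn
  have hs : n + 1 - r ≤ n := by omega
  set q := Fintype.card F
  have hqR : (2 : ℝ) ≤ (q : ℝ) := two_le_qR
  have hq0 : (0 : ℝ) < (q : ℝ) := by linarith
  have hBpos : (0 : ℝ) < (q : ℝ) ^ n - 1 := by
    have : (1 : ℝ) < (q : ℝ) ^ n := one_lt_pow₀ (by linarith) (by omega)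
    linarith
  rw [probTF_eq hn hs]
  set m := n + 1 - r with hm
  set c : ℕ → ℝ := fun i => ((q : ℝ) ^ n - (q : ℝ) ^ i) / ((q : ℝ) ^ n - 1) with hc
  have h1 : ∏ i ∈ Finset.range m, c i = ∏ i ∈ Finset.range m, c (m - 1 - i) :=
    (Finset.prod_range_reflect c m).symm
  have h2 : ∀ i ∈ Finset.range m, c (m - 1 - i) =
      ((q : ℝ) ^ n / ((q : ℝ) ^ n - 1)) * (1 - ((q : ℝ))⁻¹ ^ (i + r)) := by
    intro i hi
    rw [Finset.mem_range] at hi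
    have hidx : m - 1 - i = n - (i + r) := by omega
    have hle : i + r ≤ n := by omega
    have hpow : (q : ℝ) ^ (m - 1 - i) = (q : ℝ) ^ n * ((q : ℝ))⁻¹ ^ (i + r) := by
      rw [hidx, inv_pow, pow_sub₀ _ (ne_of_gt hq0) hle]
    rw [hc]
    simp only
    rw [hpow]
    field_simp
  rw [h1, Finset.prod_congr rfl h2, Finset.prod_mul_distrib, Finset.prod_const,
    Finset.card_range]
end H5

section H6

lemma one_sub_ge_exp {x c : ℝ} (hx : 0 ≤ x) (hc : 0 < c) (h : c⁻¹ ≤ 1 - x) :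
    Real.exp (-(c * x)) ≤ 1 - x := by
  have hcinv : (0 : ℝ) < c⁻¹ := inv_pos.2 hc
  have hx1 : 0 < 1 - x := lt_of_lt_of_le hcinv h
  have h3 : 1 + x / (1 - x) = (1 - x)⁻¹ := by field_simp; ring
  have h4 := Real.add_one_le_exp (x / (1 - x))
  have h5 : (1 - x)⁻¹ ≤ Real.exp (x / (1 - x)) := by rw [← h3]; linarith
  have h6 : Real.exp (-(x / (1 - x))) ≤ 1 - x := by
    rw [Real.exp_neg]
    calc (Real.exp (x / (1 - x)))⁻¹ ≤ ((1 - x)⁻¹)⁻¹ := by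
          apply inv_anti₀ (by positivity) h5
      _ = 1 - x := inv_inv _
  refine le_trans (Real.exp_le_exp.2 ?_) h6
  have h7 : x / (1 - x) ≤ c * x := by
    rw [div_le_iff₀ hx1]
    have h8 := mul_le_mul_of_nonneg_left h (mul_nonneg hc.le hx)
    have h9 : c * x * c⁻¹ = x := by field_simp
    nlinarith
  linarith

lemma sum_pow_le {x : ℝ} (hx0 : 0 ≤ x) (hx1 : x < 1) (m k : ℕ) :
    ∑ i ∈ Finset.range m, x ^ (i + k) ≤ x ^ k * (1 - x)⁻¹ := by
  have h1 : ∀ i ∈ Finset.range m, x ^ (i + k) = x ^ k * x ^ i := fun i _ => by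
    rw [pow_add]; ring
  rw [Finset.sum_congr rfl h1, ← Finset.mul_sum]
  apply mul_le_mul_of_nonneg_left _ (pow_nonneg hx0 k)
  calc ∑ i ∈ Finset.range m, x ^ i ≤ ∑' i : ℕ, x ^ i :=
        Summable.sum_le_tsum _ (fun i _ => pow_nonneg hx0 i) (summable_geometric_of_lt_one hx0 hx1)
    _ = (1 - x)⁻¹ := tsum_geometric_of_lt_one hx0 hx1

lemma prod_ge_exp {s : Finset ℕ} {f b : ℕ → ℝ} (h : ∀ i ∈ s, Real.exp (-(b i)) ≤ f i) :
    Real.exp (-(∑ i ∈ s, b i)) ≤ ∏ i ∈ s, f i := by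
  have h1 : Real.exp (-(∑ i ∈ s, b i)) = ∏ i ∈ s, Real.exp (-(b i)) := by
    rw [← Real.exp_sum]
    congr 1
    rw [Finset.sum_neg_distrib]
  rw [h1]
  exact Finset.prod_le_prod (fun i _ => (Real.exp_pos _).le) h

lemma tprod_zero_aux (c : ℝ) : (∏' j : ℕ, (1 - c ^ (j + 0))) = 0 := by
  have h0 : (1 : ℝ) - c ^ (0 + 0) = 0 := by norm_num
  have hp : HasProd (fun j : ℕ => 1 - c ^ (j + 0)) 0 := by
    rw [HasProd]
    have hev : ∀ᶠ s : Finset ℕ in atTop, ∏ b ∈ s, ((1 : ℝ) - c ^ (b + 0)) = 0 :=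
      eventually_atTop.2 ⟨{0}, fun s hs =>
        Finset.prod_eq_zero (hs (Finset.mem_singleton_self 0)) h0⟩
    exact tendsto_const_nhds.congr' (hev.mono fun s h => h.symm)
  exact hp.tprod_eq

lemma multipliable_aux {y : ℝ} (hy0 : 0 < y) (hy : y ≤ 1 / 2) {r : ℕ} (hr : 1 ≤ r) :
    Multipliable (fun j : ℕ => 1 - y ^ (j + r)) := by
  have hy1 : y < 1 := by linarith
  have hle : ∀ j : ℕ, y ^ (j + r) ≤ y := by
    intro j
    have := pow_le_pow_of_le_one hy0.le hy1.le (show 1 ≤ j + r by omega)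
    rwa [pow_one] at this
  have hfpos : ∀ j : ℕ, 0 < 1 - y ^ (j + r) := fun j => by
    have := hle j; linarith
  have hlog : Summable (fun j : ℕ => Real.log (1 - y ^ (j + r))) := by
    rw [← summable_neg_iff]
    have hsum2 : Summable (fun j : ℕ => 2 * y ^ (j + r)) := by
      apply Summable.mul_left
      apply Summable.congr ((summable_geometric_of_lt_one hy0.le hy1).mul_left (y ^ r))
      intro j
      rw [pow_add]
      ring
    apply Summable.of_nonneg_of_le _ _ hsum2
    · intro j
      have h1 : Real.log (1 - y ^ (j + r)) ≤ 0 :=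
        Real.log_nonpos (hfpos j).le (by have := pow_nonneg hy0.le (j + r); linarith)
      linarith
    · intro j
      have hbound : Real.exp (-(2 * y ^ (j + r))) ≤ 1 - y ^ (j + r) := by
        apply one_sub_ge_exp (pow_nonneg hy0.le _) (by norm_num)
        have := hle j
        norm_num
        linarith
      have h2 := (Real.le_log_iff_exp_le (hfpos j)).2 hbound
      linarith
  have hs := hlog.hasSum.rexp
  have heq : (Real.exp ∘ fun j : ℕ => Real.log (1 - y ^ (j + r))) =
      fun j : ℕ => 1 - y ^ (j + r) := by
    funext j
    exact Real.exp_log (hfpos j)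
  rw [heq] at hs
  exact hs.multipliable

end H6

set_option maxHeartbeats 1000000 in
theorem stmt10 (F : Type*) [Field F] [Fintype F] (q : ℕ)
    (hq : Fintype.card F = q) :
    (∀ r : ℕ,
      Filter.Tendsto (fun n : ℕ => probTF F n (n + 1 - r)) atTop
        (𝓝 (∏' j : ℕ, (1 - ((q : ℝ))⁻¹ ^ (j + r))))) ∧
    (∀ r : ℕ, (∏' j : ℕ, (1 - ((q : ℝ))⁻¹ ^ (j + r))) ∈ Set.Icc (0 : ℝ) 1) ∧
    (∏' j : ℕ, (1 - ((q : ℝ))⁻¹ ^ (j + 0))) = 0 ∧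
    (∀ n r : ℕ, 1 ≤ r → r ≤ n →
      (3 ≤ q → Real.exp (-(q : ℝ) ^ ((1 : ℤ) - (r : ℤ))) ≤ probTF F n (n + 1 - r)) ∧
      (q = 2 → Real.exp (-(4 / 3) * (2 : ℝ) ^ ((1 : ℤ) - (r : ℤ))) ≤
        probTF F n (n + 1 - r))) := by
  classical
  have hq2 : 2 ≤ q := hq ▸ Fintype.one_lt_card
  have hqR2 : (2 : ℝ) ≤ (q : ℝ) := by exact_mod_cast hq2
  have hy0 : (0 : ℝ) < ((q : ℝ))⁻¹ := by positivity
  have hy : ((q : ℝ))⁻¹ ≤ 1 / 2 := by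
    have := inv_anti₀ (by norm_num : (0:ℝ) < 2) hqR2
    simpa using this
  have hy1 : ((q : ℝ))⁻¹ < 1 := by linarith
  have h2qn : ∀ k : ℕ, 1 ≤ k → (2 : ℝ) ≤ (q : ℝ) ^ k := by
    intro k hk
    calc (2 : ℝ) = 2 ^ 1 := (pow_one 2).symm
      _ ≤ (2 : ℝ) ^ k := pow_le_pow_right₀ one_le_two hk
      _ ≤ (q : ℝ) ^ k := pow_le_pow_left₀ (by norm_num) hqR2 k
  have hzero : ∀ n : ℕ, probTF F n (n + 1) = 0 := by
    intro n
    have hempty : (Finset.univ.filter (fun g : Fin (n + 1) → Fin n → F =>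
        (∀ i, g i ≠ 0) ∧ n + 1 < TvalF F n g)) = ∅ := by
      rw [Finset.filter_eq_empty_iff]
      rintro g -
      rintro ⟨-, hT⟩
      have := tvalF_le g
      omega
    rw [probTF]
    rw [hempty]
    simp
  -- decomposition bridge in terms of q
  have hdecq : ∀ n r : ℕ, 1 ≤ r → r ≤ n →
      probTF F n (n + 1 - r) =
        ((q : ℝ) ^ n / ((q : ℝ) ^ n - 1)) ^ (n + 1 - r) *
          ∏ i ∈ Finset.range (n + 1 - r), (1 - ((q : ℝ))⁻¹ ^ (i + r)) := by
    intro n r hr hrn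
    rw [probTF_decomp hr hrn, hq]
  refine ⟨?_, ?_, tprod_zero_aux _, ?_⟩
  · -- Part 1 : the limit
    intro r
    rcases Nat.eq_zero_or_pos r with hr0 | hrpos
    · subst hr0
      rw [tprod_zero_aux ((q : ℝ))⁻¹]
      have heq : (fun n : ℕ => probTF F n (n + 1 - 0)) = fun _ : ℕ => (0 : ℝ) := by
        funext n
        rw [Nat.sub_zero, hzero n]
      rw [heq]
      exact tendsto_const_nhds
    · have hmul := multipliable_aux hy0 hy hrpos
      have hPn := hmul.hasProd.tendsto_prod_nat
      have hms : Tendsto (fun n : ℕ => n + 1 - r) atTop atTop :=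
        tendsto_atTop_atTop.2 (fun b => ⟨b + r, fun a ha => by omega⟩)
      have hP := hPn.comp hms
      set A : ℕ → ℝ := fun n => ((q : ℝ) ^ n / ((q : ℝ) ^ n - 1)) ^ (n + 1 - r) with hAdef
      have hA1 : ∀ n : ℕ, 1 ≤ n → 1 ≤ A n := by
        intro n hn
        apply one_le_pow₀
        have h2 := h2qn n hn
        rw [le_div_iff₀ (by linarith)]
        linarith
      have hA2 : ∀ n : ℕ, 1 ≤ n →
          A n ≤ Real.exp (2 * ((n : ℝ) + 1) * ((q : ℝ))⁻¹ ^ n) := by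
        intro n hn
        have h2 := h2qn n hn
        have hbpos : (0 : ℝ) < (q : ℝ) ^ n - 1 := by linarith
        have hyn : ((q : ℝ))⁻¹ ^ n = ((q : ℝ) ^ n)⁻¹ := by rw [inv_pow]
        have hstep : (q : ℝ) ^ n / ((q : ℝ) ^ n - 1) ≤
            Real.exp (2 * ((q : ℝ))⁻¹ ^ n) := by
          have h1 : (q : ℝ) ^ n / ((q : ℝ) ^ n - 1) = 1 + 1 / ((q : ℝ) ^ n - 1) := by
            field_simp; ring
          have hinv2 : ((q : ℝ) ^ n)⁻¹ * ((q : ℝ) ^ n) = 1 :=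
            inv_mul_cancel₀ (by positivity)
          have h2' : 1 / ((q : ℝ) ^ n - 1) ≤ 2 * ((q : ℝ))⁻¹ ^ n := by
            rw [hyn, div_le_iff₀ hbpos]
            nlinarith
          have h3 := Real.add_one_le_exp (2 * ((q : ℝ))⁻¹ ^ n)
          linarith
        calc A n ≤ (Real.exp (2 * ((q : ℝ))⁻¹ ^ n)) ^ (n + 1 - r) :=
              pow_le_pow_left₀ (by positivity) hstep _
          _ = Real.exp (((n + 1 - r : ℕ) : ℝ) * (2 * ((q : ℝ))⁻¹ ^ n)) := by
              rw [← Real.exp_nat_mul]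
          _ ≤ Real.exp (2 * ((n : ℝ) + 1) * ((q : ℝ))⁻¹ ^ n) := by
              apply Real.exp_le_exp.2
              have hc : ((n + 1 - r : ℕ) : ℝ) ≤ (n : ℝ) + 1 := by
                have : n + 1 - r ≤ n + 1 := by omega
                exact_mod_cast this
              have hnn : (0 : ℝ) ≤ ((q : ℝ))⁻¹ ^ n := by positivity
              nlinarith
      have htend0 : Tendsto (fun n : ℕ => 2 * ((n : ℝ) + 1) * ((q : ℝ))⁻¹ ^ n)
          atTop (𝓝 0) := by
        have hnorm : ‖((q : ℝ))⁻¹‖ < 1 := by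
          rw [Real.norm_eq_abs, abs_of_pos hy0]; linarith
        have hs1 : Summable (fun n : ℕ => (n : ℝ) * ((q : ℝ))⁻¹ ^ n) := by
          have h := summable_norm_pow_mul_geometric_of_norm_lt_one (R := ℝ) 1 hnorm
          exact (h.of_norm).congr (fun n => by rw [pow_one])
        have hs2 : Summable (fun n : ℕ => ((q : ℝ))⁻¹ ^ n) :=
          summable_geometric_of_lt_one hy0.le hy1
        have hs3 : Summable (fun n : ℕ => 2 * ((n : ℝ) + 1) * ((q : ℝ))⁻¹ ^ n) := by
          apply Summable.congr ((hs1.add hs2).mul_left 2)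
          intro n; ring
        exact hs3.tendsto_atTop_zero
      have hexp1 : Tendsto (fun n : ℕ => Real.exp (2 * ((n : ℝ) + 1) * ((q : ℝ))⁻¹ ^ n))
          atTop (𝓝 1) := by
        have h := (Real.continuous_exp.tendsto 0).comp htend0
        simpa [Function.comp_def] using h
      have hA : Tendsto A atTop (𝓝 1) := by
        apply tendsto_of_tendsto_of_tendsto_of_le_of_le' tendsto_const_nhds hexp1
        · exact eventually_atTop.2 ⟨1, hA1⟩
        · exact eventually_atTop.2 ⟨1, hA2⟩
      have hfinal := hA.mul hP
      rw [one_mul] at hfinal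
      apply hfinal.congr'
      refine eventually_atTop.2 ⟨r, fun n hn => ?_⟩
      exact (hdecq n r hrpos hn).symm
  · -- Part 2 : Icc membership
    intro r
    rcases Nat.eq_zero_or_pos r with hr0 | hrpos
    · subst hr0
      rw [tprod_zero_aux ((q : ℝ))⁻¹]
      exact ⟨le_refl 0, zero_le_one⟩
    · have hmul := multipliable_aux hy0 hy hrpos
      have hPn := hmul.hasProd.tendsto_prod_nat
      apply isClosed_Icc.mem_of_tendsto hPn
      apply Filter.Eventually.of_forall
      intro k
      constructor
      · apply Finset.prod_nonneg
        intro i _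
        have h1 : ((q : ℝ))⁻¹ ^ (i + r) ≤ 1 := pow_le_one₀ hy0.le (by linarith)
        linarith
      · apply Finset.prod_le_one
        · intro i _
          have h1 : ((q : ℝ))⁻¹ ^ (i + r) ≤ 1 := pow_le_one₀ hy0.le (by linarith)
          linarith
        · intro i _
          have h1 : (0 : ℝ) ≤ ((q : ℝ))⁻¹ ^ (i + r) := by positivity
          linarith
  · -- Part 4 : the explicit lower bounds
    intro n r hr hrn
    have hn1 : 1 ≤ n := hr.trans hrn
    have hdec := hdecq n r hr hrn
    have hPnonneg : (0 : ℝ) ≤ ∏ i ∈ Finset.range (n + 1 - r), (1 - ((q : ℝ))⁻¹ ^ (i + r)) := by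
      apply Finset.prod_nonneg
      intro i _
      have h1 : ((q : ℝ))⁻¹ ^ (i + r) ≤ 1 := pow_le_one₀ hy0.le (by linarith)
      linarith
    have hple : (∏ i ∈ Finset.range (n + 1 - r), (1 - ((q : ℝ))⁻¹ ^ (i + r))) ≤
        probTF F n (n + 1 - r) := by
      rw [hdec]
      apply le_mul_of_one_le_left hPnonneg
      apply one_le_pow₀
      have h2 := h2qn n hn1
      rw [le_div_iff₀ (by linarith)]
      linarith
    have hyle : ∀ i : ℕ, ((q : ℝ))⁻¹ ^ (i + r) ≤ ((q : ℝ))⁻¹ := by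
      intro i
      have h := pow_le_pow_of_le_one hy0.le hy1.le (show 1 ≤ i + r by omega)
      rwa [pow_one] at h
    constructor
    · -- q ≥ 3
      intro hq3
      have hqR3 : (3 : ℝ) ≤ (q : ℝ) := by exact_mod_cast hq3
      set c : ℝ := (q : ℝ) / ((q : ℝ) - 1) with hc
      have hcpos : 0 < c := by apply div_pos <;> linarith
      have hcinv : c⁻¹ = 1 - ((q : ℝ))⁻¹ := by
        rw [hc, inv_div]
        field_simp
      have hfac : ∀ i ∈ Finset.range (n + 1 - r),
          Real.exp (-(c * ((q : ℝ))⁻¹ ^ (i + r))) ≤ 1 - ((q : ℝ))⁻¹ ^ (i + r) := by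
        intro i _
        apply one_sub_ge_exp (by positivity) hcpos
        rw [hcinv]
        linarith [hyle i]
      have hsum : ∑ i ∈ Finset.range (n + 1 - r), c * ((q : ℝ))⁻¹ ^ (i + r) ≤
          (q : ℝ) * ((q : ℝ))⁻¹ ^ r := by
        rw [← Finset.mul_sum]
        have h1 := sum_pow_le hy0.le hy1 (n + 1 - r) r
        have h2 : (1 - ((q : ℝ))⁻¹)⁻¹ = c := by rw [← hcinv, inv_inv]
        have h3 : ∑ i ∈ Finset.range (n + 1 - r), ((q : ℝ))⁻¹ ^ (i + r) ≤
            ((q : ℝ))⁻¹ ^ r * c := by rw [← h2]; exact h1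
        have hcq : c * c ≤ (q : ℝ) := by
          rw [hc, div_mul_div_comm, div_le_iff₀ (by nlinarith)]
          nlinarith
        have hsumnn : (0:ℝ) ≤ ∑ i ∈ Finset.range (n + 1 - r), ((q : ℝ))⁻¹ ^ (i + r) :=
          Finset.sum_nonneg fun i _ => by positivity
        calc c * ∑ i ∈ Finset.range (n + 1 - r), ((q : ℝ))⁻¹ ^ (i + r)
            ≤ c * (((q : ℝ))⁻¹ ^ r * c) := mul_le_mul_of_nonneg_left h3 hcpos.le
          _ = (c * c) * ((q : ℝ))⁻¹ ^ r := by ring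
          _ ≤ (q : ℝ) * ((q : ℝ))⁻¹ ^ r :=
              mul_le_mul_of_nonneg_right hcq (by positivity)
      have hzpow : (q : ℝ) ^ ((1 : ℤ) - (r : ℤ)) = (q : ℝ) * ((q : ℝ))⁻¹ ^ r := by
        rw [zpow_sub₀ (by positivity), zpow_one, zpow_natCast, div_eq_mul_inv, ← inv_pow]
      calc Real.exp (-(q : ℝ) ^ ((1 : ℤ) - (r : ℤ)))
          = Real.exp (-((q : ℝ) * ((q : ℝ))⁻¹ ^ r)) := by rw [hzpow]
        _ ≤ Real.exp (-(∑ i ∈ Finset.range (n + 1 - r), c * ((q : ℝ))⁻¹ ^ (i + r))) :=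
            Real.exp_le_exp.2 (by linarith)
        _ ≤ ∏ i ∈ Finset.range (n + 1 - r), (1 - ((q : ℝ))⁻¹ ^ (i + r)) := prod_ge_exp hfac
        _ ≤ probTF F n (n + 1 - r) := hple
    · -- q = 2
      intro hq2'
      subst hq2'
      simp only [Nat.cast_ofNat] at hple hPnonneg hyle
      have hzpow2 : (2 : ℝ) ^ ((1 : ℤ) - (r : ℤ)) = 2 * ((2 : ℝ))⁻¹ ^ r := by
        rw [zpow_sub₀ (by norm_num), zpow_one, zpow_natCast, div_eq_mul_inv, ← inv_pow]
      rcases Nat.lt_or_ge r 2 with hr2 | hr2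
      · -- r = 1
        have hr1 : r = 1 := by omega
        subst hr1
        have harg : ((1 : ℤ) - ((1 : ℕ) : ℤ)) = 0 := by norm_num
        rw [harg, zpow_zero, mul_one]
        have hm' : n + 1 - 1 = n := by omega
        rw [hm'] at hple
        rcases Nat.lt_or_ge n 2 with h2 | h2
        · have hn1' : n = 1 := by omega
          subst hn1'
          rw [Finset.prod_range_one] at hple
          norm_num at hple
          have h1 := Real.add_one_le_exp (4 / 3 : ℝ)
          have h2' : Real.exp (-(4 / 3 : ℝ)) ≤ 1 / 2 := by
            rw [Real.exp_neg]
            have h3 : (2 : ℝ) ≤ Real.exp (4 / 3) := by linarith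
            have h4 := inv_anti₀ (by norm_num : (0:ℝ) < 2) h3
            calc (Real.exp (4/3 : ℝ))⁻¹ ≤ (2:ℝ)⁻¹ := h4
              _ = 1 / 2 := by norm_num
          linarith
        · set f : ℕ → ℝ := fun i => 1 - ((2 : ℝ))⁻¹ ^ (i + 1) with hf
          have hsplit : (∏ i ∈ Finset.range 2, f i) * (∏ i ∈ Finset.Ico 2 n, f i) =
              ∏ i ∈ Finset.range n, f i := Finset.prod_range_mul_prod_Ico f h2
          have h38 : ∏ i ∈ Finset.range 2, f i = 3 / 8 := by
            rw [Finset.prod_range_succ, Finset.prod_range_one, hf]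
            norm_num
          have hfacI : ∀ i ∈ Finset.Ico 2 n,
              Real.exp (-((8 / 7 : ℝ) * ((2 : ℝ))⁻¹ ^ (i + 1))) ≤ f i := by
            intro i hi
            rw [Finset.mem_Ico] at hi
            apply one_sub_ge_exp (by positivity) (by norm_num)
            have hle3 : ((2 : ℝ))⁻¹ ^ (i + 1) ≤ ((2 : ℝ))⁻¹ ^ 3 := by
              apply pow_le_pow_of_le_one (by norm_num) (by norm_num)
              omega
            norm_num at hle3 ⊢
            linarith
          have hsumI : ∑ i ∈ Finset.Ico 2 n, (8 / 7 : ℝ) * ((2 : ℝ))⁻¹ ^ (i + 1) ≤ 2 / 7 := by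
            rw [← Finset.mul_sum]
            have h1 : ∑ i ∈ Finset.Ico 2 n, ((2 : ℝ))⁻¹ ^ (i + 1) =
                ∑ i ∈ Finset.range (n - 2), ((2 : ℝ))⁻¹ ^ (2 + i + 1) :=
              Finset.sum_Ico_eq_sum_range _ 2 n
            have h2' : ∑ i ∈ Finset.range (n - 2), ((2 : ℝ))⁻¹ ^ (2 + i + 1) =
                ∑ i ∈ Finset.range (n - 2), ((2 : ℝ))⁻¹ ^ (i + 3) := by
              apply Finset.sum_congr rfl
              intro i _
              congr 1
              omega
            have h3 := sum_pow_le (x := ((2:ℝ))⁻¹) (by norm_num) (by norm_num) (n - 2) 3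
            have h4 : (((2:ℝ))⁻¹) ^ 3 * (1 - ((2:ℝ))⁻¹)⁻¹ = 1 / 4 := by norm_num
            rw [h1, h2']
            rw [h4] at h3
            nlinarith
          have hIco : Real.exp (-(2 / 7 : ℝ)) ≤ ∏ i ∈ Finset.Ico 2 n, f i := by
            calc Real.exp (-(2 / 7 : ℝ)) ≤
                Real.exp (-(∑ i ∈ Finset.Ico 2 n, (8 / 7 : ℝ) * ((2 : ℝ))⁻¹ ^ (i + 1))) :=
                  Real.exp_le_exp.2 (by linarith)
              _ ≤ ∏ i ∈ Finset.Ico 2 n, f i := prod_ge_exp hfacI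
          have hPge : (3 / 8 : ℝ) * Real.exp (-(2 / 7 : ℝ)) ≤ ∏ i ∈ Finset.range n, f i := by
            rw [← hsplit, h38]
            exact mul_le_mul_of_nonneg_left hIco (by norm_num)
          have hkey : Real.exp (-(4 / 3 : ℝ)) ≤ (3 / 8 : ℝ) * Real.exp (-(2 / 7 : ℝ)) := by
            have he : Real.exp (-(4 / 3) : ℝ) =
                Real.exp (-(22 / 21) : ℝ) * Real.exp (-(2 / 7) : ℝ) := by
              rw [← Real.exp_add]
              norm_num
            have h83 : Real.exp (-(22 / 21) : ℝ) ≤ 3 / 8 := by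
              have h1 : (8 / 3 : ℝ) ≤ Real.exp (22 / 21) := le_of_lt <|
                calc (8 / 3 : ℝ) ≤ 2.7182818283 := by norm_num
                  _ < Real.exp 1 := Real.exp_one_gt_d9
                  _ ≤ Real.exp (22 / 21 : ℝ) := Real.exp_le_exp.2 (by norm_num)
              have hm : Real.exp (-(22/21) : ℝ) * Real.exp (22/21 : ℝ) = 1 := by
                rw [← Real.exp_add]
                norm_num
              nlinarith [Real.exp_pos (-(22/21) : ℝ), Real.exp_pos ((22/21) : ℝ)]
            rw [he]
            exact mul_le_mul_of_nonneg_right h83 (Real.exp_pos _).le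
          calc Real.exp (-(4 / 3 : ℝ)) ≤ (3 / 8 : ℝ) * Real.exp (-(2 / 7 : ℝ)) := hkey
            _ ≤ ∏ i ∈ Finset.range n, f i := hPge
            _ ≤ probTF F n (n + 1 - 1) := hple
      · -- r ≥ 2
        have hfac : ∀ i ∈ Finset.range (n + 1 - r),
            Real.exp (-((4 / 3 : ℝ) * ((2 : ℝ))⁻¹ ^ (i + r))) ≤
              1 - ((2 : ℝ))⁻¹ ^ (i + r) := by
          intro i _
          apply one_sub_ge_exp (by positivity) (by norm_num)
          have hle2 : ((2 : ℝ))⁻¹ ^ (i + r) ≤ ((2 : ℝ))⁻¹ ^ 2 := by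
            apply pow_le_pow_of_le_one (by norm_num) (by norm_num)
            omega
          norm_num at hle2 ⊢
          linarith
        have hsum : ∑ i ∈ Finset.range (n + 1 - r), (4 / 3 : ℝ) * ((2 : ℝ))⁻¹ ^ (i + r) ≤
            (4 / 3 : ℝ) * (2 * ((2 : ℝ))⁻¹ ^ r) := by
          rw [← Finset.mul_sum]
          have h1 := sum_pow_le (x := ((2:ℝ))⁻¹) (by norm_num) (by norm_num) (n + 1 - r) r
          have h2' : (1 - ((2:ℝ))⁻¹)⁻¹ = 2 := by norm_num
          rw [h2'] at h1
          nlinarith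
        calc Real.exp (-(4 / 3 : ℝ) * (2 : ℝ) ^ ((1 : ℤ) - (r : ℤ)))
            = Real.exp (-((4 / 3 : ℝ) * (2 * ((2 : ℝ))⁻¹ ^ r))) := by
              rw [hzpow2]; ring_nf
          _ ≤ Real.exp (-(∑ i ∈ Finset.range (n + 1 - r),
                (4 / 3 : ℝ) * ((2 : ℝ))⁻¹ ^ (i + r))) :=
              Real.exp_le_exp.2 (by linarith)
          _ ≤ ∏ i ∈ Finset.range (n + 1 - r), (1 - ((2 : ℝ))⁻¹ ^ (i + r)) := prod_ge_exp hfac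
          _ ≤ probTF F n (n + 1 - r) := hple
end

section
/- Fix n, m ∈ ℕ and let X_1, ..., X_m be i.i.d. random vectors in {0,1}^n with arbitrary common law, with coordinates X_{1j}, j ∈ {1,...,n}. Let A(n,m) be the event that X_1 + ⋯ + X_m ≡ 0 (mod 2) componentwise. Then P[A(n,m)] = 2^{−n} ∑_{J ⊆ {1,...,n}} ( E[(−1)^{∑_{j∈J} X_{1j}}] )^m, where the sum is over all subsets J of {1,...,n}, including the empty set. -/
open Finset

lemma chi_add (a b : ZMod 2) :
    (-1 : ℝ) ^ (a + b).val = (-1) ^ a.val * (-1) ^ b.val := by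
  have h01 : ∀ c : ZMod 2, c = 0 ∨ c = 1 := by decide
  rcases h01 a with rfl | rfl <;> rcases h01 b with rfl | rfl <;>
    norm_num [show ((0:ZMod 2)).val = 0 from rfl, show ((1:ZMod 2)).val = 1 from rfl,
      show ((2:ZMod 2)).val = 0 from rfl]

lemma chi_sum {ι : Type*} (s : Finset ι) (f : ι → ZMod 2) :
    (-1 : ℝ) ^ (∑ i ∈ s, f i).val = ∏ i ∈ s, (-1) ^ (f i).val := by
  classical
  induction s using Finset.cons_induction with
  | empty => simp
  | cons a s ha ih => rw [Finset.sum_cons, Finset.prod_cons, chi_add, ih]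

lemma indicator_eq (n : ℕ) (y : Fin n → ZMod 2) :
    (if ∀ j, y j = 0 then (1 : ℝ) else 0) =
      (2 : ℝ)⁻¹ ^ n * ∑ J : Finset (Fin n), ∏ j ∈ J, (-1 : ℝ) ^ (y j).val := by
  have h1 : ∑ J : Finset (Fin n), ∏ j ∈ J, (-1 : ℝ) ^ (y j).val
      = ∏ j, ((-1 : ℝ) ^ (y j).val + 1) := by
    rw [Finset.prod_add]
    rw [← Finset.powerset_univ]
    exact (Finset.sum_congr rfl fun t _ => by simp).symm
  rw [h1]
  by_cases h : ∀ j, y j = 0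
  · rw [if_pos h]
    have hv : ∀ j : Fin n, ((-1 : ℝ) ^ (y j).val + 1) = 2 := fun j => by
      rw [h j, show ((0:ZMod 2)).val = 0 from rfl]; norm_num
    rw [Finset.prod_congr rfl fun j _ => hv j, Finset.prod_const, Finset.card_univ,
      Fintype.card_fin, ← mul_pow]
    norm_num
  · rw [if_neg h]
    push_neg at h
    obtain ⟨j, hj⟩ := h
    have hy1 : y j = 1 := by
      have : ∀ a : ZMod 2, a ≠ 0 → a = 1 := by decide
      exact this _ hj
    have hz : ((-1 : ℝ) ^ (y j).val + 1) = 0 := by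
      rw [hy1, show ((1:ZMod 2)).val = 1 from rfl]; norm_num
    rw [Finset.prod_eq_zero (Finset.mem_univ j) hz, mul_zero]

theorem stmt12 (n m : ℕ) (q : (Fin n → ZMod 2) → ℝ)
    (hqnn : ∀ x, 0 ≤ q x) (hq1 : ∑ x : Fin n → ZMod 2, q x = 1) :
    (∑ M : Fin m → Fin n → ZMod 2,
        if ∀ j, (∑ i, M i j) = 0 then ∏ i, q (M i) else 0) =
      (2 : ℝ)⁻¹ ^ n * ∑ J : Finset (Fin n),
        (∑ x : Fin n → ZMod 2, q x * (-1 : ℝ) ^ (∑ j ∈ J, (x j).val)) ^ m := by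
  classical
  have key : ∀ M : Fin m → Fin n → ZMod 2,
      (if ∀ j, (∑ i, M i j) = 0 then ∏ i, q (M i) else 0) =
        (2 : ℝ)⁻¹ ^ n * ∑ J : Finset (Fin n),
          ∏ i, (q (M i) * (-1 : ℝ) ^ (∑ j ∈ J, (M i j).val)) := by
    intro M
    have h0 : (if ∀ j, (∑ i, M i j) = 0 then (∏ i, q (M i)) else 0) =
        (if ∀ j, (∑ i : Fin m, M i j) = (0 : ZMod 2) then (1 : ℝ) else 0) * ∏ i, q (M i) := by
      split <;> simp
    rw [h0, indicator_eq n (fun j => ∑ i, M i j), mul_assoc, Finset.sum_mul]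
    congr 1
    refine Finset.sum_congr rfl fun J _ => ?_
    have h1 : ∏ j ∈ J, (-1 : ℝ) ^ ((∑ i, M i j).val) =
        ∏ i, (-1 : ℝ) ^ (∑ j ∈ J, (M i j).val) := by
      rw [Finset.prod_congr rfl fun j _ => chi_sum Finset.univ (fun i => M i j),
        Finset.prod_comm]
      exact Finset.prod_congr rfl fun i _ => Finset.prod_pow_eq_pow_sum J _ _
    rw [h1, mul_comm, ← Finset.prod_mul_distrib]
  rw [Finset.sum_congr rfl fun M _ => key M, ← Finset.mul_sum, Finset.sum_comm]
  congr 1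
  refine Finset.sum_congr rfl fun J _ => ?_
  rw [Fintype.sum_pow]
end

section
/- Let Z_1, Z_2, ... be independent Poisson random variables with mean μ > 0, and let Z_1^E, Z_2^E, ... be i.i.d. random variables whose common law is that of Z_1 conditioned to be even, i.e. P[Z_1^E = k] = P[Z_1 = k | Z_1 ∈ 2ℤ]. Let π_n(m) be the probability that all n components of a multinomial (m; 1/n, ..., 1/n) random vector are even. Then π_n(m) = ( P[Z_1^E + ⋯ + Z_n^E = m] / P[Z_1 + ⋯ + Z_n = m] ) · ((1 + e^{−2μ})/2)^n. -/
open Filter Topology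

/-- `P[ξ_1 + ⋯ + ξ_n = m]` for i.i.d. `ℕ`-valued random variables with pmf `f`:
the sum over all tuples of values summing to `m` of the product of the pmf.
(Each value in such a tuple is at most `m`, so it suffices to sum over
tuples valued in `{0, …, m}`.) -/
noncomputable def sumDist (f : ℕ → ℝ) (n m : ℕ) : ℝ :=
  ∑ g ∈ Finset.univ.filter
      (fun g : Fin n → Fin (m + 1) => (∑ i, (g i : ℕ)) = m),
    ∏ i, f (g i)

open Finset MvPolynomial

/-- count vector of a function -/
private def cnt {m n : ℕ} (f : Fin m → Fin n) : Fin n → ℕ :=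
  fun j => (Finset.univ.filter (fun i => f i = j)).card

private lemma cnt_sum {m n : ℕ} (f : Fin m → Fin n) : ∑ j, cnt f j = m := by
  classical
  have := Finset.card_eq_sum_card_fiberwise
    (f := f) (s := (univ : Finset (Fin m))) (t := univ) (fun i _ => mem_univ _)
  simpa [cnt, card_univ] using this.symm

private lemma prodXpow {n : ℕ} (k : Fin n → ℕ) :
    ∏ j, (X j : MvPolynomial (Fin n) ℕ) ^ k j
      = monomial (Finsupp.equivFunOnFinite.symm k) 1 := by
  rw [← MvPolynomial.prod_X_pow_eq_monomial]
  refine (Finset.prod_subset (Finset.subset_univ _) fun j _ hj => ?_).symm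
  have h0 : (Finsupp.equivFunOnFinite.symm k) j = 0 := Finsupp.notMem_support_iff.mp hj
  have hk : k j = 0 := h0
  simp [hk]

private lemma fiber_card {m n : ℕ} (g : Fin n → ℕ) (hg : ∑ j, g j = m) :
    (Finset.univ.filter (fun f : Fin m → Fin n => cnt f = g)).card
      = Nat.multinomial Finset.univ g := by
  classical
  have key : ((∑ j, (X j : MvPolynomial (Fin n) ℕ)) ^ m)
      = ∑ f : Fin m → Fin n, ∏ j, (X j : MvPolynomial (Fin n) ℕ) ^ cnt f j := by
    calc (∑ j, (X j : MvPolynomial (Fin n) ℕ)) ^ m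
        = ∏ _i : Fin m, ∑ j, (X j : MvPolynomial (Fin n) ℕ) := by
          rw [Finset.prod_const, Finset.card_univ, Fintype.card_fin]
      _ = ∑ f ∈ Fintype.piFinset (fun _ : Fin m => (Finset.univ : Finset (Fin n))),
            ∏ i, X (f i) := Finset.prod_univ_sum _ _
      _ = ∑ f : Fin m → Fin n, ∏ i, (X (f i) : MvPolynomial (Fin n) ℕ) := by
          rw [Fintype.piFinset_univ]
      _ = _ := Finset.sum_congr rfl fun f _ => ?_
    rw [← Finset.prod_fiberwise_of_maps_to (fun i (_ : i ∈ univ) => Finset.mem_univ (f i))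
      (fun i => (X (f i) : MvPolynomial (Fin n) ℕ))]
    refine Finset.prod_congr rfl fun j _ => ?_
    rw [Finset.prod_congr rfl (fun i hi => by rw [(Finset.mem_filter.mp hi).2]),
      Finset.prod_const]
    rfl
  have hB := Finset.sum_pow_eq_sum_piAntidiag (Finset.univ : Finset (Fin n))
    (fun j => (X j : MvPolynomial (Fin n) ℕ)) m
  have hg' : g ∈ Finset.piAntidiag (Finset.univ : Finset (Fin n)) m := by
    rw [Finset.mem_piAntidiag]; exact ⟨hg, fun i _ => Finset.mem_univ i⟩
  have hco := congrArg (MvPolynomial.coeff (Finsupp.equivFunOnFinite.symm g))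
    (key.symm.trans hB)
  have hinj : ∀ k : Fin n → ℕ,
      (Finsupp.equivFunOnFinite.symm k = Finsupp.equivFunOnFinite.symm g) ↔ k = g :=
    fun k => Finsupp.equivFunOnFinite.symm.injective.eq_iff
  rw [coeff_sum] at hco
  simp only [prodXpow, coeff_monomial] at hco
  -- LHS of hco : ∑ f, ite (symm (cnt f) = symm g) 1 0
  have hl : (∑ f : Fin m → Fin n,
      if Finsupp.equivFunOnFinite.symm (cnt f) = Finsupp.equivFunOnFinite.symm g then (1:ℕ) else 0)
      = (Finset.univ.filter (fun f : Fin m → Fin n => cnt f = g)).card := by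
    rw [Finset.card_filter]
    exact Finset.sum_congr rfl fun f _ => by simp only [hinj]
  -- RHS
  rw [coeff_sum] at hco
  simp only [← MvPolynomial.C_eq_coe_nat, prodXpow, MvPolynomial.C_mul_monomial, mul_one,
    coeff_monomial, Nat.cast_id] at hco
  have hr : (∑ k ∈ Finset.piAntidiag (Finset.univ : Finset (Fin n)) m,
      if Finsupp.equivFunOnFinite.symm k = Finsupp.equivFunOnFinite.symm g
        then Nat.multinomial Finset.univ k else 0) = Nat.multinomial Finset.univ g := by
    have hstep : ∀ k ∈ Finset.piAntidiag (Finset.univ : Finset (Fin n)) m,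
        (if Finsupp.equivFunOnFinite.symm k = Finsupp.equivFunOnFinite.symm g
          then Nat.multinomial Finset.univ k else 0)
          = if k = g then Nat.multinomial Finset.univ k else 0 :=
      fun k _ => by simp only [hinj k]
    rw [Finset.sum_congr rfl hstep,
      Finset.sum_ite_eq' _ g (fun k => Nat.multinomial Finset.univ k), if_pos hg']
  rw [hl] at hco
  rw [← hr]
  exact hco

private lemma sumDist_eq (f : ℕ → ℝ) (n m : ℕ) :
    sumDist f n m
      = ∑ k ∈ Finset.piAntidiag (Finset.univ : Finset (Fin n)) m, ∏ i, f (k i) := by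
  classical
  rw [sumDist]
  refine Finset.sum_bij' (fun g _ => fun i => (g i : ℕ))
    (fun k hk => fun i => (⟨k i, ?_⟩ : Fin (m + 1)))
    (fun g hg => ?_) (fun k hk => ?_) (fun g hg => ?_) (fun k hk => ?_) (fun g hg => ?_)
  · -- k i < m + 1
    have h1 : k i ≤ ∑ j, k j := Finset.single_le_sum (fun _ _ => Nat.zero_le _) (mem_univ i)
    have h2 : ∑ j, k j = m := (mem_piAntidiag.mp hk).1
    omega
  · exact mem_piAntidiag.mpr ⟨(mem_filter.mp hg).2, fun i _ => mem_univ i⟩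
  · refine mem_filter.mpr ⟨mem_univ _, ?_⟩
    simpa using (mem_piAntidiag.mp hk).1
  · funext i; exact Fin.ext rfl
  · funext i; rfl
  · rfl

private lemma prod_poisson {μ : ℝ} (n m : ℕ) (k : Fin n → ℕ) (hk : ∑ i, k i = m) :
    ∏ i, (Real.exp (-μ) * μ ^ (k i) / (Nat.factorial (k i) : ℝ))
      = Real.exp (-μ) ^ n * μ ^ m / (Nat.factorial m : ℝ)
          * (Nat.multinomial Finset.univ k : ℝ) := by
  have hspec := Nat.multinomial_spec (Finset.univ : Finset (Fin n)) k
  rw [hk] at hspec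
  have hfact : (∏ i, (Nat.factorial (k i) : ℝ)) * (Nat.multinomial Finset.univ k : ℝ)
      = (Nat.factorial m : ℝ) := by exact_mod_cast congrArg (Nat.cast (R := ℝ)) hspec
  have h1 : (∏ i, (Nat.factorial (k i) : ℝ)) ≠ 0 :=
    Finset.prod_ne_zero_iff.mpr fun i _ => Nat.cast_ne_zero.mpr (Nat.factorial_ne_zero _)
  have h2 : (Nat.factorial m : ℝ) ≠ 0 := Nat.cast_ne_zero.mpr (Nat.factorial_ne_zero _)
  rw [Finset.prod_div_distrib, Finset.prod_mul_distrib, Finset.prod_const,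
    Finset.prod_pow_eq_pow_sum, hk, Finset.card_univ, Fintype.card_fin]
  rw [div_mul_eq_mul_div, div_eq_div_iff h1 h2]
  linear_combination (-(Real.exp (-μ) ^ n * μ ^ m)) * hfact

private lemma sum_multinomial_all (n m : ℕ) :
    ∑ k ∈ Finset.piAntidiag (Finset.univ : Finset (Fin n)) m, Nat.multinomial Finset.univ k
      = n ^ m := by
  classical
  have hmap : ∀ f ∈ (Finset.univ : Finset (Fin m → Fin n)),
      cnt f ∈ Finset.piAntidiag (Finset.univ : Finset (Fin n)) m :=
    fun f _ => mem_piAntidiag.mpr ⟨cnt_sum f, fun i _ => mem_univ i⟩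
  have hcard := Finset.card_eq_sum_card_fiberwise hmap
  rw [card_univ, Fintype.card_fun, Fintype.card_fin, Fintype.card_fin] at hcard
  rw [hcard]
  refine Finset.sum_congr rfl fun k hk => ?_
  exact (fiber_card k (mem_piAntidiag.mp hk).1).symm

private lemma sum_multinomial_even (n m : ℕ) :
    ∑ k ∈ (Finset.piAntidiag (Finset.univ : Finset (Fin n)) m).filter
        (fun k => ∀ j, Even (k j)), Nat.multinomial Finset.univ k
      = (Finset.univ.filter (fun f : Fin m → Fin n => ∀ j, Even (cnt f j))).card := by
  classical
  have hmap : ∀ f ∈ Finset.univ.filter (fun f : Fin m → Fin n => ∀ j, Even (cnt f j)),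
      cnt f ∈ (Finset.piAntidiag (Finset.univ : Finset (Fin n)) m).filter
        (fun k => ∀ j, Even (k j)) := fun f hf =>
    mem_filter.mpr ⟨mem_piAntidiag.mpr ⟨cnt_sum f, fun i _ => mem_univ i⟩,
      (mem_filter.mp hf).2⟩
  have hcard := Finset.card_eq_sum_card_fiberwise hmap
  rw [hcard]
  refine Finset.sum_congr rfl fun k hk => ?_
  obtain ⟨hk1, hk2⟩ := mem_filter.mp hk
  rw [← fiber_card k (mem_piAntidiag.mp hk1).1, Finset.filter_filter]
  congr 1
  refine Finset.filter_congr fun f _ => ?_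
  constructor
  · exact fun h => ⟨fun j => h ▸ hk2 j, h⟩
  · exact And.right

theorem stmt13 (μ : ℝ) (hμ : 0 < μ) (n m : ℕ) (hn : 1 ≤ n) :
    piProb n m =
      (sumDist (fun k => if Even k then
            (Real.exp (-μ) * μ ^ k / (Nat.factorial k : ℝ)) /
              ((1 + Real.exp (-2 * μ)) / 2) else 0) n m /
        sumDist (fun k => Real.exp (-μ) * μ ^ k / (Nat.factorial k : ℝ)) n m) *
      ((1 + Real.exp (-2 * μ)) / 2) ^ n := by
  classical
  set c : ℝ := (1 + Real.exp (-2 * μ)) / 2 with hc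
  have hcpos : 0 < c := by positivity
  set E : ℝ := Real.exp (-μ) ^ n * μ ^ m / (Nat.factorial m : ℝ) with hE
  have hEpos : 0 < E := by positivity
  -- denominator sumDist
  have hden : sumDist (fun k => Real.exp (-μ) * μ ^ k / (Nat.factorial k : ℝ)) n m
      = E * (n : ℝ) ^ m := by
    rw [sumDist_eq]
    rw [Finset.sum_congr rfl fun k hk => prod_poisson n m k (mem_piAntidiag.mp hk).1]
    rw [← Finset.mul_sum, ← Nat.cast_sum, sum_multinomial_all]
    push_cast
    ring
  -- numerator sumDist
  have hnum : sumDist (fun k => if Even k then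
        (Real.exp (-μ) * μ ^ k / (Nat.factorial k : ℝ)) / c else 0) n m
      = E / c ^ n *
        ((Finset.univ.filter
          (fun f : Fin m → Fin n => ∀ j, Even (cnt f j))).card : ℝ) := by
    rw [sumDist_eq]
    have hterm : ∀ k ∈ Finset.piAntidiag (Finset.univ : Finset (Fin n)) m,
        (∏ i, if Even (k i) then
            (Real.exp (-μ) * μ ^ (k i) / (Nat.factorial (k i) : ℝ)) / c else 0)
          = if (∀ j, Even (k j)) then
              E / c ^ n * (Nat.multinomial Finset.univ k : ℝ) else 0 := by
      intro k hk
      by_cases h : ∀ j, Even (k j)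
      · rw [if_pos h, Finset.prod_congr rfl (fun i _ => if_pos (h i)),
          Finset.prod_div_distrib, Finset.prod_const, Finset.card_univ, Fintype.card_fin,
          prod_poisson n m k (mem_piAntidiag.mp hk).1]
        ring
      · obtain ⟨i, hi⟩ := not_forall.mp h
        rw [if_neg h]
        exact Finset.prod_eq_zero (mem_univ i) (by rw [if_neg hi])
    rw [Finset.sum_congr rfl hterm, ← Finset.sum_filter, ← Finset.mul_sum, ← Nat.cast_sum,
      sum_multinomial_even]
  rw [hnum, hden, piProb]
  have h1 : ((n : ℝ)) ^ m ≠ 0 := by positivity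
  have hE0 : E ≠ 0 := ne_of_gt hEpos
  have hc0 : c ≠ 0 := ne_of_gt hcpos
  have hcn : c ^ n ≠ 0 := pow_ne_zero _ hc0
  have hNeq : ((Finset.univ.filter (fun f : Fin m → Fin n =>
      ∀ j, Even ((Finset.univ.filter (fun i => f i = j)).card))).card : ℝ)
      = ((Finset.univ.filter (fun f : Fin m → Fin n => ∀ j, Even (cnt f j))).card : ℝ) := rfl
  rw [hNeq]
  field_simp
end
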